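/- arXiv:1803.00936 — 6 statements merged into one kernel-verified Lean document; each statement's English description precedes it below -/
import Mathlib

section
/- Let (M, α_M) →^i (K, α_K) →^σ (L, α_L) be a central extension of hom-Lie-Rinehart algebras over (A, φ). If every central extension of (K, α_K) splits uniquely in the category of hom-Lie-Rinehart algebras over (A, φ) — that is, for every central extension (N, α_N) →^j (L', α_{L'}) →^τ (K, α_K) there exists a unique homomorphism s: (K, α_K) → (L', α_{L'}) over (A, φ) with τ ∘ s = Id_K — then (M, α_M) →^i (K, α_K) →^σ (L, α_L) is a universal central extension of (L, α_L). -/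
open TensorProduct Function Set

/-- A hom-Lie-Rinehart algebra structure over `(A, φ)` on the `A`-module `L`. -/
structure HLR (R A : Type) [CommRing R] [CommRing A] [Algebra R A]
    (φ : A →ₐ[R] A) (L : Type) [AddCommGroup L] [Module R L]
    [Module A L] [IsScalarTower R A L] : Type where
  bracket : L → L → L
  add_left : ∀ x y z, bracket (x + y) z = bracket x z + bracket y z
  add_right : ∀ x y z, bracket x (y + z) = bracket x y + bracket x z
  smul_left : ∀ (r : R) (x y : L), bracket (r • x) y = r • bracket x y
  smul_right : ∀ (r : R) (x y : L), bracket x (r • y) = r • bracket x y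
  skew : ∀ x y, bracket x y = - bracket y x
  alpha : L → L
  alpha_add : ∀ x y, alpha (x + y) = alpha x + alpha y
  alpha_smulR : ∀ (r : R) (x : L), alpha (r • x) = r • alpha x
  rho : L → A → A
  rho_add_left : ∀ x y a, rho (x + y) a = rho x a + rho y a
  rho_smulR_left : ∀ (r : R) (x : L) (a : A), rho (r • x) a = r • rho x a
  rho_add_right : ∀ (x : L) (a b : A), rho x (a + b) = rho x a + rho x b
  rho_smulR_right : ∀ (x : L) (r : R) (a : A), rho x (r • a) = r • rho x a
  rho_deriv : ∀ (x : L) (a b : A), rho x (a * b) = φ a * rho x b + φ b * rho x a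
  alpha_bracket : ∀ x y, alpha (bracket x y) = bracket (alpha x) (alpha y)
  hom_jacobi : ∀ x y z, bracket (alpha x) (bracket y z)
      + bracket (alpha y) (bracket z x) + bracket (alpha z) (bracket x y) = 0
  alpha_smulA : ∀ (a : A) (x : L), alpha (a • x) = φ a • alpha x
  rho_alpha : ∀ (x : L) (a : A), rho (alpha x) (φ a) = φ (rho x a)
  rho_bracket : ∀ (x y : L) (a : A), rho (bracket x y) (φ a)
      = rho (alpha x) (rho y a) - rho (alpha y) (rho x a)
  rho_smulA : ∀ (a : A) (x : L) (b : A), rho (a • x) b = φ a * rho x b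
  leibniz : ∀ (x : L) (a : A) (y : L),
      bracket x (a • y) = φ a • bracket x y + rho x a • alpha y

section Defs

variable {R A : Type} [CommRing R] [CommRing A] [Algebra R A] {φ : A →ₐ[R] A}

/-- Homomorphism of hom-Lie-Rinehart algebras over `(A, φ)`: an `A`-linear map
preserving brackets, the twist maps and the anchors. -/
def IsHLRHom {K L : Type}
    [AddCommGroup K] [Module R K] [Module A K] [IsScalarTower R A K]
    [AddCommGroup L] [Module R L] [Module A L] [IsScalarTower R A L]
    (SK : HLR R A φ K) (SL : HLR R A φ L) (f : K → L) : Prop :=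
  (∀ x y, f (x + y) = f x + f y) ∧
  (∀ (a : A) (x : K), f (a • x) = a • f x) ∧
  (∀ x y, f (SK.bracket x y) = SL.bracket (f x) (f y)) ∧
  (∀ x, f (SK.alpha x) = SL.alpha (f x)) ∧
  (∀ (x : K) (a : A), SL.rho (f x) a = SK.rho x a)

/-- The center `Z_A(L)` of a hom-Lie-Rinehart algebra. -/
def HLR.center {L : Type}
    [AddCommGroup L] [Module R L] [Module A L] [IsScalarTower R A L]
    (S : HLR R A φ L) : Set L :=
  {x | ∀ (a : A) (z : L),
    S.bracket (a • x) z = 0 ∧ S.bracket (a • S.alpha x) z = 0 ∧ S.rho x a = 0}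

/-- `(M, i) → (K, σ)` is a central extension of `L`. -/
def IsCentralExt {M K L : Type}
    [AddCommGroup M] [Module R M] [Module A M] [IsScalarTower R A M]
    [AddCommGroup K] [Module R K] [Module A K] [IsScalarTower R A K]
    [AddCommGroup L] [Module R L] [Module A L] [IsScalarTower R A L]
    (SM : HLR R A φ M) (SK : HLR R A φ K) (SL : HLR R A φ L)
    (i : M → K) (σ : K → L) : Prop :=
  IsHLRHom SM SK i ∧ IsHLRHom SK SL σ ∧ Function.Injective i ∧
  Function.Surjective σ ∧ Set.range i = {k | σ k = 0} ∧
  {k | σ k = 0} ⊆ SK.center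

/-- `(M, i) → (K, σ)` is an `α`-central extension of `L`. -/
def IsAlphaCentralExt {M K L : Type}
    [AddCommGroup M] [Module R M] [Module A M] [IsScalarTower R A M]
    [AddCommGroup K] [Module R K] [Module A K] [IsScalarTower R A K]
    [AddCommGroup L] [Module R L] [Module A L] [IsScalarTower R A L]
    (SM : HLR R A φ M) (SK : HLR R A φ K) (SL : HLR R A φ L)
    (i : M → K) (σ : K → L) : Prop :=
  IsHLRHom SM SK i ∧ IsHLRHom SK SL σ ∧ Function.Injective i ∧
  Function.Surjective σ ∧ Set.range i = {k | σ k = 0} ∧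
  (∀ m : M, i (SM.alpha m) ∈ SK.center)

/-- A hom-Lie-Rinehart algebra is perfect if `L = {L, L}`, the `A`-submodule
generated by all brackets. -/
def HLR.IsPerfect {L : Type}
    [AddCommGroup L] [Module R L] [Module A L] [IsScalarTower R A L]
    (S : HLR R A φ L) : Prop :=
  Submodule.span A {z : L | ∃ x y, z = S.bracket x y} = ⊤

/-- A hom-Lie-Rinehart algebra is `α`-perfect if `L = {α_L(L), α_L(L)}`. -/
def HLR.IsAlphaPerfect {L : Type}
    [AddCommGroup L] [Module R L] [Module A L] [IsScalarTower R A L]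
    (S : HLR R A φ L) : Prop :=
  Submodule.span A {z : L | ∃ x y, z = S.bracket (S.alpha x) (S.alpha y)} = ⊤

/-- Universal central extension. -/
def IsUniversalCentralExt {M K L : Type}
    [AddCommGroup M] [Module R M] [Module A M] [IsScalarTower R A M]
    [AddCommGroup K] [Module R K] [Module A K] [IsScalarTower R A K]
    [AddCommGroup L] [Module R L] [Module A L] [IsScalarTower R A L]
    (SM : HLR R A φ M) (SK : HLR R A φ K) (SL : HLR R A φ L)
    (i : M → K) (σ : K → L) : Prop :=
  IsCentralExt SM SK SL i σ ∧
  ∀ (M' L' : Type)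
    [AddCommGroup M'] [Module R M'] [Module A M'] [IsScalarTower R A M']
    [AddCommGroup L'] [Module R L'] [Module A L'] [IsScalarTower R A L']
    (SM' : HLR R A φ M') (SL' : HLR R A φ L') (j : M' → L') (τ : L' → L),
    IsCentralExt SM' SL' SL j τ →
    ∃! h : K → L', IsHLRHom SK SL' h ∧ ∀ x, τ (h x) = σ x

/-- Universal `α`-central extension. -/
def IsUniversalAlphaCentralExt {M K L : Type}
    [AddCommGroup M] [Module R M] [Module A M] [IsScalarTower R A M]
    [AddCommGroup K] [Module R K] [Module A K] [IsScalarTower R A K]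
    [AddCommGroup L] [Module R L] [Module A L] [IsScalarTower R A L]
    (SM : HLR R A φ M) (SK : HLR R A φ K) (SL : HLR R A φ L)
    (i : M → K) (σ : K → L) : Prop :=
  IsCentralExt SM SK SL i σ ∧
  ∀ (M' L' : Type)
    [AddCommGroup M'] [Module R M'] [Module A M'] [IsScalarTower R A M']
    [AddCommGroup L'] [Module R L'] [Module A L'] [IsScalarTower R A L']
    (SM' : HLR R A φ M') (SL' : HLR R A φ L') (j : M' → L') (τ : L' → L),
    IsAlphaCentralExt SM' SL' SL j τ →
    ∃! h : K → L', IsHLRHom SK SL' h ∧ ∀ x, τ (h x) = σ x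

end Defs

section UceDefs

variable {R A : Type} [CommRing R] [CommRing A] [Algebra R A] (φ : A →ₐ[R] A)
variable {L : Type} [AddCommGroup L] [Module R L] [Module A L] [IsScalarTower R A L]

/-- The `A`-submodule `M^φ_A L` of `A ⊗ L ⊗ L` of defining relations of `uce^φ_A L`. -/
def uceRel (S : HLR R A φ L) : Submodule A (A ⊗[R] (L ⊗[R] L)) :=
  Submodule.span A
    ({t | ∃ (a : A) (x : L), t = a ⊗ₜ[R] (x ⊗ₜ[R] x)} ∪
     {t | ∃ (a : A) (x y : L), t = a ⊗ₜ[R] (x ⊗ₜ[R] y) + a ⊗ₜ[R] (y ⊗ₜ[R] x)} ∪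
     {t | ∃ (a : A) (x y z : L), t =
        a ⊗ₜ[R] (S.alpha x ⊗ₜ[R] S.bracket y z)
          + a ⊗ₜ[R] (S.alpha y ⊗ₜ[R] S.bracket z x)
          + a ⊗ₜ[R] (S.alpha z ⊗ₜ[R] S.bracket x y)} ∪
     {t | ∃ (a : A) (x y x' y' : L), t =
        φ a ⊗ₜ[R] (S.bracket x y ⊗ₜ[R] S.bracket x' y')
          + S.rho (S.bracket x y) a ⊗ₜ[R] (S.alpha x' ⊗ₜ[R] S.alpha y')
          - (1 : A) ⊗ₜ[R] (S.bracket x y ⊗ₜ[R] (a • S.bracket x' y'))})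

/-- The underlying `A`-module of `uce^φ_A L`. -/
abbrev UCE (S : HLR R A φ L) : Type := (A ⊗[R] (L ⊗[R] L)) ⧸ uceRel φ S

/-- The coset `(a, x, y)` in `uce^φ_A L`. -/
noncomputable def uceMk (S : HLR R A φ L) (a : A) (x y : L) : UCE φ S :=
  Submodule.Quotient.mk (a ⊗ₜ[R] (x ⊗ₜ[R] y))

/-- `U` is the hom-Lie-Rinehart structure of `uce^φ_A L`: its bracket, twist map and anchor
are given by the defining formulas on cosets. -/
def IsUceStructure (S : HLR R A φ L) (U : HLR R A φ (UCE φ S)) : Prop :=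
  (∀ (a₁ a₂ : A) (x₁ y₁ x₂ y₂ : L),
    U.bracket (uceMk φ S a₁ x₁ y₁) (uceMk φ S a₂ x₂ y₂) =
      uceMk φ S (φ (a₁ * a₂)) (S.bracket x₁ y₁) (S.bracket x₂ y₂)
      + uceMk φ S (φ a₁ * S.rho (S.bracket x₁ y₁) a₂) (S.alpha x₂) (S.alpha y₂)
      - uceMk φ S (φ a₂ * S.rho (S.bracket x₂ y₂) a₁) (S.alpha x₁) (S.alpha y₁)) ∧
  (∀ (a : A) (x y : L),
    U.alpha (uceMk φ S a x y) = uceMk φ S (φ a) (S.alpha x) (S.alpha y)) ∧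
  (∀ (a b : A) (x y : L),
    U.rho (uceMk φ S a x y) b = φ a * S.rho (S.bracket x y) b)

/-- `u` is the canonical map `u_L : uce^φ_A L → L`, `(a,x,y) ↦ a • [x,y]`. -/
def IsUceMap (S : HLR R A φ L) (u : UCE φ S → L) : Prop :=
  (∀ ξ η, u (ξ + η) = u ξ + u η) ∧
  (∀ (a : A) (ξ : UCE φ S), u (a • ξ) = a • u ξ) ∧
  (∀ (a : A) (x y : L), u (uceMk φ S a x y) = a • S.bracket x y)

end UceDefs

section MoreDefs

variable {R A : Type} [CommRing R] [CommRing A] [Algebra R A] (φ : A →ₐ[R] A)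

/-- `F` is the homomorphism `uce^φ_A(f)` induced by `f` on universal central extensions. -/
def IsUceFunctorMap {K L : Type}
    [AddCommGroup K] [Module R K] [Module A K] [IsScalarTower R A K]
    [AddCommGroup L] [Module R L] [Module A L] [IsScalarTower R A L]
    (SK : HLR R A φ K) (SL : HLR R A φ L)
    (UK : HLR R A φ (UCE φ SK)) (UL : HLR R A φ (UCE φ SL))
    (f : K → L) (F : UCE φ SK → UCE φ SL) : Prop :=
  IsHLRHom UK UL F ∧
  ∀ (a : A) (x y : K), F (uceMk φ SK a x y) = uceMk φ SL a (f x) (f y)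

/-- `D` is an `α`-derivation of `(L, α_L)` with symbol `σD`. -/
def IsAlphaDeriv {L : Type}
    [AddCommGroup L] [Module R L] [Module A L] [IsScalarTower R A L]
    (S : HLR R A φ L) (D : L → L) (σD : A → A) : Prop :=
  (∀ x y, D (x + y) = D x + D y) ∧
  (∀ (r : R) (x : L), D (r • x) = r • D x) ∧
  (∀ a b, σD (a + b) = σD a + σD b) ∧
  (∀ (r : R) (a : A), σD (r • a) = r • σD a) ∧
  (∀ a b, σD (a * b) = φ a * σD b + φ b * σD a) ∧
  (∀ x, D (S.alpha x) = S.alpha (D x)) ∧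
  (∀ x y, D (S.bracket x y) = S.bracket (D x) (S.alpha y) + S.bracket (S.alpha x) (D y)) ∧
  (∀ a, σD (φ a) = φ (σD a)) ∧
  (∀ (a : A) (x : L), D (a • x) = φ a • D x + σD a • S.alpha x) ∧
  (∀ (x : L) (a : A), σD (S.rho x a) = S.rho (S.alpha x) (σD a) + S.rho (D x) (φ a))

/-- A quasi hom-action of `(L, α_L)` on `(M, α_M)`. -/
def IsQuasiHomAction {L M : Type}
    [AddCommGroup L] [Module R L] [Module A L] [IsScalarTower R A L]
    [AddCommGroup M] [Module R M] [Module A M] [IsScalarTower R A M]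
    (SL : HLR R A φ L) (SM : HLR R A φ M) (act : L → M → M) : Prop :=
  (∀ (x : L) (a : A) (m : M),
      act x (a • m) = φ a • act x m + SL.rho x a • SM.alpha m) ∧
  (∀ (x y : L) (m : M),
      act (SL.bracket x y) (SM.alpha m)
        = act (SL.alpha x) (act y m) - act (SL.alpha y) (act x m)) ∧
  (∀ (x : L) (m n : M),
      act (SL.alpha x) (SM.bracket m n)
        = SM.bracket (act x m) (SM.alpha n) + SM.bracket (SM.alpha m) (act x n)) ∧
  (∀ (x : L) (m : M) (a : A),
      SM.rho (act x m) (φ a)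
        = SL.rho (SL.alpha x) (SM.rho m a) - SM.rho (SM.alpha m) (SL.rho x a)) ∧
  (∀ (x : L) (m : M), SM.alpha (act x m) = act (SL.alpha x) (SM.alpha m))

/-- Compatibility of two quasi hom-actions on each other. -/
def AreCompatibleActions {L M : Type}
    [AddCommGroup L] [Module R L] [Module A L] [IsScalarTower R A L]
    [AddCommGroup M] [Module R M] [Module A M] [IsScalarTower R A M]
    (SL : HLR R A φ L) (SM : HLR R A φ M)
    (actLM : L → M → M) (actML : M → L → L) : Prop :=
  (∀ (x : L) (m : M) (a : A), SM.rho (actLM x m) a = - SL.rho (actML m x) a) ∧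
  (∀ (m : M) (x : L) (n : M), actLM (actML m x) n = SM.bracket n (actLM x m)) ∧
  (∀ (x : L) (m : M) (y : L), actML (actLM x m) y = SL.bracket y (actML m x))

end MoreDefs

section StarDefs

variable {R A : Type} [CommRing R] [CommRing A] [Algebra R A] (φ : A →ₐ[R] A)
variable {L M : Type}
  [AddCommGroup L] [Module R L] [Module A L] [IsScalarTower R A L]
  [AddCommGroup M] [Module R M] [Module A M] [IsScalarTower R A M]

/-- The `A`-submodule of defining relations of the non-abelian tensor product `L ∗ M`,
inside the free `A`-module on the symbols `x ∗ m`. -/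
noncomputable def starRel (SL : HLR R A φ L) (SM : HLR R A φ M)
    (actLM : L → M → M) (actML : M → L → L) : Submodule A ((L × M) →₀ A) :=
  Submodule.span A
    ({t | ∃ (x y : L) (m : M), t =
        Finsupp.single (x + y, m) (1 : A) - Finsupp.single (x, m) 1
          - Finsupp.single (y, m) 1} ∪
     {t | ∃ (r : R) (x : L) (m : M), t =
        Finsupp.single (r • x, m) (1 : A) - r • Finsupp.single (x, m) (1 : A)} ∪
     {t | ∃ (x : L) (m n : M), t =
        Finsupp.single (x, m + n) (1 : A) - Finsupp.single (x, m) 1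
          - Finsupp.single (x, n) 1} ∪
     {t | ∃ (r : R) (x : L) (m : M), t =
        Finsupp.single (x, r • m) (1 : A) - r • Finsupp.single (x, m) (1 : A)} ∪
     {t | ∃ (x y : L) (m : M), t =
        Finsupp.single (SL.bracket x y, SM.alpha m) (1 : A)
          - Finsupp.single (SL.alpha x, actLM y m) 1
          + Finsupp.single (SL.alpha y, actLM x m) 1} ∪
     {t | ∃ (x : L) (m n : M), t =
        Finsupp.single (SL.alpha x, SM.bracket m n) (1 : A)
          - Finsupp.single (actML n x, SM.alpha m) 1
          + Finsupp.single (actML m x, SM.alpha n) 1} ∪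
     {t | ∃ (a b : A) (x y : L) (m n : M), t =
        Finsupp.single (a • actML m x, b • actLM y n) (1 : A)
          + Finsupp.single (b • actML n y, a • actLM x m) 1} ∪
     {t | ∃ (a b : A) (x y : L) (m n : M), t =
        Finsupp.single (a • actML m x, b • actLM y n) (1 : A)
          - φ (a * b) • Finsupp.single (actML m x, actLM y n) (1 : A)
          + (φ a * SM.rho (actLM x m) b) • Finsupp.single (SL.alpha y, SM.alpha n) (1 : A)
          - (φ b * SM.rho (actLM y n) a) • Finsupp.single (SL.alpha x, SM.alpha m) (1 : A)})

/-- The underlying `A`-module of the non-abelian tensor product `L ∗ M`. -/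
abbrev StarMod (SL : HLR R A φ L) (SM : HLR R A φ M)
    (actLM : L → M → M) (actML : M → L → L) : Type :=
  ((L × M) →₀ A) ⧸ starRel φ SL SM actLM actML

/-- The generator `x ∗ m` of `L ∗ M`. -/
noncomputable def starMk (SL : HLR R A φ L) (SM : HLR R A φ M)
    (actLM : L → M → M) (actML : M → L → L) (x : L) (m : M) :
    StarMod φ SL SM actLM actML :=
  Submodule.Quotient.mk (Finsupp.single (x, m) (1 : A))

/-- `U` is the hom-Lie-Rinehart structure of the non-abelian tensor product `L ∗ M`. -/
def IsStarStructure (SL : HLR R A φ L) (SM : HLR R A φ M)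
    (actLM : L → M → M) (actML : M → L → L)
    (U : HLR R A φ (StarMod φ SL SM actLM actML)) : Prop :=
  (∀ (x : L) (m : M),
      U.alpha (starMk φ SL SM actLM actML x m)
        = starMk φ SL SM actLM actML (SL.alpha x) (SM.alpha m)) ∧
  (∀ (a b : A) (x y : L) (m n : M),
      U.bracket (a • starMk φ SL SM actLM actML x m)
          (b • starMk φ SL SM actLM actML y n)
        = - starMk φ SL SM actLM actML (a • actML m x) (b • actLM y n)) ∧
  (∀ (x : L) (m : M) (a : A),
      U.rho (starMk φ SL SM actLM actML x m) a = SM.rho (actLM x m) a)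

/-- A hom-Lie-Rinehart pairing of `(L, α_L)` and `(M, α_M)` into `(N, α_N)`. -/
def IsHLRPairing {N : Type}
    [AddCommGroup N] [Module R N] [Module A N] [IsScalarTower R A N]
    (SL : HLR R A φ L) (SM : HLR R A φ M) (SN : HLR R A φ N)
    (actLM : L → M → M) (actML : M → L → L) (f : L → M → N) : Prop :=
  (∀ (x y : L) (m : M), f (x + y) m = f x m + f y m) ∧
  (∀ (r : R) (x : L) (m : M), f (r • x) m = r • f x m) ∧
  (∀ (x : L) (m n : M), f x (m + n) = f x m + f x n) ∧
  (∀ (r : R) (x : L) (m : M), f x (r • m) = r • f x m) ∧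
  (∀ (x : L) (m : M) (a : A), SN.rho (f x m) a = SM.rho (actLM x m) a) ∧
  (∀ (x y : L) (m : M),
      f (SL.bracket x y) (SM.alpha m)
        = f (SL.alpha x) (actLM y m) - f (SL.alpha y) (actLM x m)) ∧
  (∀ (x : L) (m n : M),
      f (SL.alpha x) (SM.bracket m n)
        = f (actML n x) (SM.alpha m) - f (actML m x) (SM.alpha n)) ∧
  (∀ (x : L) (m : M), f (SL.alpha x) (SM.alpha m) = SN.alpha (f x m)) ∧
  (∀ (a b : A) (x y : L) (m n : M),
      f (a • actML m x) (b • actLM y n)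
        = - (φ (a * b) • SN.bracket (f x m) (f y n))
          - (φ a * SN.rho (f x m) b) • SN.alpha (f y n)
          + (φ b * SN.rho (f y n) a) • SN.alpha (f x m))

end StarDefs

section Pullback

variable {R A : Type} [CommRing R] [CommRing A] [Algebra R A] {φ : A →ₐ[R] A}
variable {K L' L : Type}
  [AddCommGroup K] [Module R K] [Module A K] [IsScalarTower R A K]
  [AddCommGroup L'] [Module R L'] [Module A L'] [IsScalarTower R A L']
  [AddCommGroup L] [Module R L] [Module A L] [IsScalarTower R A L]

lemma addhom_zero {M N : Type} [AddCommGroup M] [AddCommGroup N] {f : M → N}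
    (h : ∀ x y, f (x + y) = f x + f y) : f 0 = 0 := by
  have h0 := h 0 0
  rw [add_zero] at h0
  exact (left_eq_add.mp h0)


lemma HLR.bracket_zero_left {L : Type} [AddCommGroup L] [Module R L] [Module A L]
    [IsScalarTower R A L] (S : HLR R A φ L) (z : L) : S.bracket 0 z = 0 := by
  have h := S.add_left 0 0 z
  rw [add_zero] at h
  exact left_eq_add.mp h

lemma HLR.rho_zero_left {L : Type} [AddCommGroup L] [Module R L] [Module A L]
    [IsScalarTower R A L] (S : HLR R A φ L) (a : A) : S.rho 0 a = 0 := by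
  have h := S.rho_add_left 0 0 a
  rw [add_zero] at h
  exact left_eq_add.mp h

lemma HLR.alpha_zero {L : Type} [AddCommGroup L] [Module R L] [Module A L]
    [IsScalarTower R A L] (S : HLR R A φ L) : S.alpha 0 = 0 :=
  addhom_zero S.alpha_add

/-- The pullback of `σ : K → L` and `τ : L' → L` as an `A`-submodule of `K × L'`. -/
def pbSub {SK : HLR R A φ K} {SL' : HLR R A φ L'} {SL : HLR R A φ L}
    (σ : K → L) (τ : L' → L) (hσ : IsHLRHom SK SL σ) (hτ : IsHLRHom SL' SL τ) :
    Submodule A (K × L') where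
  carrier := {p | σ p.1 = τ p.2}
  add_mem' := by
    intro p q hp hq
    simp only [Set.mem_setOf_eq] at *
    rw [Prod.fst_add, Prod.snd_add, hσ.1, hτ.1, hp, hq]
  zero_mem' := by
    simp only [Set.mem_setOf_eq, Prod.fst_zero, Prod.snd_zero]
    rw [addhom_zero hσ.1, addhom_zero hτ.1]
  smul_mem' := by
    intro a p hp
    simp only [Set.mem_setOf_eq] at *
    rw [Prod.smul_fst, Prod.smul_snd, hσ.2.1, hτ.2.1, hp]

variable (SK : HLR R A φ K) (SL' : HLR R A φ L') (SL : HLR R A φ L)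
  (σ : K → L) (τ : L' → L) (hσ : IsHLRHom SK SL σ) (hτ : IsHLRHom SL' SL τ)

lemma pb_mem (p : pbSub σ τ hσ hτ) : σ (p : K × L').1 = τ (p : K × L').2 := p.2

lemma pb_rho_eq (p : pbSub σ τ hσ hτ) (a : A) :
    SL'.rho (p : K × L').2 a = SK.rho (p : K × L').1 a := by
  rw [← hτ.2.2.2.2, ← pb_mem SK SL' SL σ τ hσ hτ p, hσ.2.2.2.2]

/-- The pullback hom-Lie-Rinehart structure. -/
def pbHLR : HLR R A φ (pbSub σ τ hσ hτ) where
  bracket p q := ⟨(SK.bracket p.1.1 q.1.1, SL'.bracket p.1.2 q.1.2), by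
    show σ _ = τ _
    rw [hσ.2.2.1, hτ.2.2.1, pb_mem SK SL' SL σ τ hσ hτ p, pb_mem SK SL' SL σ τ hσ hτ q]⟩
  add_left x y z := by
    apply Subtype.ext; apply Prod.ext <;>
      simp [SK.add_left, SL'.add_left]
  add_right x y z := by
    apply Subtype.ext; apply Prod.ext <;>
      simp [SK.add_right, SL'.add_right]
  smul_left r x y := by
    apply Subtype.ext; apply Prod.ext <;>
      simp [SK.smul_left, SL'.smul_left]
  smul_right r x y := by
    apply Subtype.ext; apply Prod.ext <;>
      simp [SK.smul_right, SL'.smul_right]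
  skew x y := by
    apply Subtype.ext; apply Prod.ext <;>
      simp [SK.skew x.1.1 y.1.1, SL'.skew x.1.2 y.1.2]
  alpha p := ⟨(SK.alpha p.1.1, SL'.alpha p.1.2), by
    show σ _ = τ _
    rw [hσ.2.2.2.1, hτ.2.2.2.1, pb_mem SK SL' SL σ τ hσ hτ p]⟩
  alpha_add x y := by
    apply Subtype.ext; apply Prod.ext <;>
      simp [SK.alpha_add, SL'.alpha_add]
  alpha_smulR r x := by
    apply Subtype.ext; apply Prod.ext <;>
      simp [SK.alpha_smulR, SL'.alpha_smulR]
  rho p a := SK.rho p.1.1 a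
  rho_add_left x y a := by simp [SK.rho_add_left]
  rho_smulR_left r x a := by simp [SK.rho_smulR_left]
  rho_add_right x a b := SK.rho_add_right _ a b
  rho_smulR_right x r a := SK.rho_smulR_right _ r a
  rho_deriv x a b := SK.rho_deriv _ a b
  alpha_bracket x y := by
    apply Subtype.ext; apply Prod.ext <;>
      simp [SK.alpha_bracket, SL'.alpha_bracket]
  hom_jacobi x y z := by
    apply Subtype.ext; apply Prod.ext
    · simpa using SK.hom_jacobi x.1.1 y.1.1 z.1.1
    · simpa using SL'.hom_jacobi x.1.2 y.1.2 z.1.2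
  alpha_smulA a x := by
    apply Subtype.ext; apply Prod.ext <;>
      simp [SK.alpha_smulA, SL'.alpha_smulA]
  rho_alpha x a := SK.rho_alpha _ a
  rho_bracket x y a := SK.rho_bracket _ _ a
  rho_smulA a x b := by simp [SK.rho_smulA]
  leibniz x a y := by
    apply Subtype.ext; apply Prod.ext
    · simpa using SK.leibniz x.1.1 a y.1.1
    · have h := SL'.leibniz x.1.2 a y.1.2
      rw [pb_rho_eq SK SL' SL σ τ hσ hτ x a] at h
      simpa using h

/-- The kernel of `τ : L' → L` as an `A`-submodule of `L'`. -/
def kerSub : Submodule A L' where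
  carrier := {l | τ l = 0}
  add_mem' := by
    intro p q hp hq
    simp only [Set.mem_setOf_eq] at *
    rw [hτ.1, hp, hq, add_zero]
  zero_mem' := by
    simp only [Set.mem_setOf_eq]
    exact addhom_zero hτ.1
  smul_mem' := by
    intro a p hp
    simp only [Set.mem_setOf_eq] at *
    rw [hτ.2.1, hp, smul_zero]

/-- The kernel hom-Lie-Rinehart structure (trivial bracket and anchor). -/
def kerHLR : HLR R A φ (kerSub SL' SL τ hτ) where
  bracket _ _ := 0
  add_left _ _ _ := by rw [add_zero]
  add_right _ _ _ := by rw [add_zero]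
  smul_left _ _ _ := by rw [smul_zero]
  smul_right _ _ _ := by rw [smul_zero]
  skew _ _ := by rw [neg_zero]
  alpha n := ⟨SL'.alpha n.1, by
    show τ _ = 0
    rw [hτ.2.2.2.1, (n.2 : τ n.1 = 0), addhom_zero SL.alpha_add]⟩
  alpha_add x y := by
    apply Subtype.ext; simp [SL'.alpha_add]
  alpha_smulR r x := by
    apply Subtype.ext; simp [SL'.alpha_smulR]
  rho _ _ := 0
  rho_add_left _ _ _ := by rw [add_zero]
  rho_smulR_left _ _ _ := by rw [smul_zero]
  rho_add_right _ _ _ := by rw [add_zero]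
  rho_smulR_right _ _ _ := by rw [smul_zero]
  rho_deriv _ a b := by rw [mul_zero, mul_zero, add_zero]
  alpha_bracket x y := by
    apply Subtype.ext
    simp [addhom_zero SL'.alpha_add]
  hom_jacobi _ _ _ := by rw [add_zero, add_zero]
  alpha_smulA a x := by
    apply Subtype.ext; simp [SL'.alpha_smulA]
  rho_alpha _ a := by rw [map_zero]
  rho_bracket _ _ _ := by rw [sub_zero]
  rho_smulA _ _ _ := by rw [mul_zero]
  leibniz _ a y := by rw [smul_zero, zero_smul, add_zero]

end Pullback

/-- if every central extension of `(K, α_K)` splits uniquely, then the central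
extension `(M, α_M) → (K, α_K) → (L, α_L)` is a universal central extension. -/
theorem statement_0
    {R A : Type} [CommRing R] [CommRing A] [Algebra R A] (φ : A →ₐ[R] A)
    {M K L : Type}
    [AddCommGroup M] [Module R M] [Module A M] [IsScalarTower R A M]
    [AddCommGroup K] [Module R K] [Module A K] [IsScalarTower R A K]
    [AddCommGroup L] [Module R L] [Module A L] [IsScalarTower R A L]
    (SM : HLR R A φ M) (SK : HLR R A φ K) (SL : HLR R A φ L)
    (i : M → K) (σ : K → L)
    (hce : IsCentralExt SM SK SL i σ)
    (hsplit : ∀ (N L' : Type)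
      [AddCommGroup N] [Module R N] [Module A N] [IsScalarTower R A N]
      [AddCommGroup L'] [Module R L'] [Module A L'] [IsScalarTower R A L']
      (SN : HLR R A φ N) (SL' : HLR R A φ L') (j : N → L') (τ : L' → K),
      IsCentralExt SN SL' SK j τ →
      ∃! s : K → L', IsHLRHom SK SL' s ∧ ∀ x, τ (s x) = x) :
    IsUniversalCentralExt SM SK SL i σ := by
  obtain ⟨hihom, hσhom, hiinj, hσsurj, hirange, hσcent⟩ := hce
  refine ⟨⟨hihom, hσhom, hiinj, hσsurj, hirange, hσcent⟩, ?_⟩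
  intro M' L' _ _ _ _ _ _ _ _ SM' SL' j τ hτce
  obtain ⟨hjhom, hτhom, hjinj, hτsurj, hjrange, hcent⟩ := hτce
  -- the pullback of σ and τ, as a central extension of K
  let SP := pbHLR SK SL' SL σ τ hσhom hτhom
  let SN := kerHLR SL' SL τ hτhom
  let jm : kerSub SL' SL τ hτhom → pbSub σ τ hσhom hτhom :=
    fun n => ⟨(0, n.1), by
      show σ _ = τ _
      rw [addhom_zero hσhom.1, (n.2 : τ n.1 = 0)]⟩
  let pr : pbSub σ τ hσhom hτhom → K := fun p => p.1.1
  have hkercent : ∀ l' : L', τ l' = 0 → l' ∈ SL'.center := fun l' h => hcent h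
  have hbr0 : ∀ (z : L') (l' : L'), τ l' = 0 → SL'.bracket l' z = 0 := by
    intro z l' h
    have := ((hkercent l' h) 1 z).1
    rwa [one_smul] at this
  have hcentP : IsCentralExt SN SP SK jm pr := by
    refine ⟨⟨?_, ?_, ?_, ?_, ?_⟩, ⟨?_, ?_, ?_, ?_, ?_⟩, ?_, ?_, ?_, ?_⟩
    · intro x y
      apply Subtype.ext; apply Prod.ext <;> simp [jm]
    · intro a x
      apply Subtype.ext; apply Prod.ext <;> simp [jm]
    · intro x y
      apply Subtype.ext; apply Prod.ext
      · exact (SK.bracket_zero_left 0).symm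
      · show (0 : L') = SL'.bracket x.1 y.1
        exact (hbr0 y.1 x.1 x.2).symm
    · intro x
      apply Subtype.ext; apply Prod.ext
      · exact SK.alpha_zero.symm
      · rfl
    · intro x a
      exact SK.rho_zero_left a
    · intro x y; rfl
    · intro a x; rfl
    · intro x y; rfl
    · intro x; rfl
    · intro x a; rfl
    · intro n m h
      apply Subtype.ext
      have := congrArg (fun p : pbSub σ τ hσhom hτhom => p.1.2) h
      simpa [jm] using this
    · intro k
      obtain ⟨l', hl'⟩ := hτsurj (σ k)
      exact ⟨⟨(k, l'), hl'.symm⟩, rfl⟩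
    · ext p
      constructor
      · rintro ⟨n, rfl⟩
        show (0 : K) = 0
        rfl
      · intro hp
        have hp1 : (p : K × L').1 = 0 := hp
        have hτp2 : τ (p : K × L').2 = 0 := by
          rw [← (show σ (p : K × L').1 = τ (p : K × L').2 from p.2), hp1,
            addhom_zero hσhom.1]
        refine ⟨⟨(p : K × L').2, hτp2⟩, ?_⟩
        apply Subtype.ext; apply Prod.ext
        · exact hp1.symm
        · rfl
    · intro p hp
      have hp1 : (p : K × L').1 = 0 := hp
      have hτp2 : τ (p : K × L').2 = 0 := by
        rw [← (show σ (p : K × L').1 = τ (p : K × L').2 from p.2), hp1,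
          addhom_zero hσhom.1]
      have hc := hkercent _ hτp2
      intro a z
      refine ⟨?_, ?_, ?_⟩
      · apply Subtype.ext; apply Prod.ext
        · show SK.bracket (a • (p : K × L').1) _ = 0
          rw [hp1, smul_zero]
          exact SK.bracket_zero_left _
        · show SL'.bracket (a • (p : K × L').2) _ = 0
          exact (hc a z.1.2).1
      · apply Subtype.ext; apply Prod.ext
        · show SK.bracket (a • SK.alpha (p : K × L').1) _ = 0
          rw [hp1, SK.alpha_zero, smul_zero]
          exact SK.bracket_zero_left _
        · show SL'.bracket (a • SL'.alpha (p : K × L').2) _ = 0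
          exact (hc a z.1.2).2.1
      · show SK.rho (p : K × L').1 a = 0
        rw [hp1]
        exact SK.rho_zero_left a
  obtain ⟨s, ⟨hshom, hspr⟩, huniq⟩ := hsplit _ _ SN SP jm pr hcentP
  refine ⟨fun x => (s x).1.2, ⟨⟨?_, ?_, ?_, ?_, ?_⟩, ?_⟩, ?_⟩
  · intro x y
    exact congrArg (fun p : pbSub σ τ hσhom hτhom => (p : K × L').2) (hshom.1 x y)
  · intro a x
    exact congrArg (fun p : pbSub σ τ hσhom hτhom => (p : K × L').2) (hshom.2.1 a x)
  · intro x y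
    exact congrArg (fun p : pbSub σ τ hσhom hτhom => (p : K × L').2) (hshom.2.2.1 x y)
  · intro x
    exact congrArg (fun p : pbSub σ τ hσhom hτhom => (p : K × L').2) (hshom.2.2.2.1 x)
  · intro x a
    have h1 : SL'.rho (s x).1.2 a = SK.rho (s x).1.1 a :=
      pb_rho_eq SK SL' SL σ τ hσhom hτhom (s x) a
    rw [h1]
    have h2 : (s x).1.1 = x := hspr x
    rw [h2]
  · intro x
    have := (s x).2
    have h2 : (s x).1.1 = x := hspr x
    rw [← (show σ (s x).1.1 = τ (s x).1.2 from (s x).2), h2]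
  · intro h' ⟨h'hom, h'τ⟩
    funext x
    let s' : K → pbSub σ τ hσhom hτhom := fun x => ⟨(x, h' x), (h'τ x).symm⟩
    have hs' : s' = s := by
      apply huniq
      refine ⟨⟨?_, ?_, ?_, ?_, ?_⟩, fun x => rfl⟩
      · intro x y
        apply Subtype.ext; apply Prod.ext
        · rfl
        · exact h'hom.1 x y
      · intro a x
        apply Subtype.ext; apply Prod.ext
        · rfl
        · exact h'hom.2.1 a x
      · intro x y
        apply Subtype.ext; apply Prod.ext
        · rfl
        · exact h'hom.2.2.1 x y
      · intro x
        apply Subtype.ext; apply Prod.ext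
        · rfl
        · exact h'hom.2.2.2.1 x
      · intro x a
        show SK.rho x a = SK.rho x a
        rfl
    have := congrArg (fun f => (f x : pbSub σ τ hσhom hτhom)) hs'
    calc h' x = (s' x).1.2 := rfl
      _ = (s x).1.2 := by rw [hs']
end

section
/- Let (M', α_{M'}) →^j (L', α_{L'}) →^τ (L, α_L) be a central extension of hom-Lie-Rinehart algebras over (A, φ) and let (K, α_K) be a perfect hom-Lie-Rinehart algebra over (A, φ). If f, g: (K, α_K) → (L', α_{L'}) are homomorphisms over (A, φ) with τ ∘ f = τ ∘ g, then f = g. -/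
open TensorProduct Function Set

/-- two homomorphisms from a perfect hom-Lie-Rinehart algebra into a central
extension which agree after projection are equal. -/
theorem statement_1
    {R A : Type} [CommRing R] [CommRing A] [Algebra R A] (φ : A →ₐ[R] A)
    {M' L' L K : Type}
    [AddCommGroup M'] [Module R M'] [Module A M'] [IsScalarTower R A M']
    [AddCommGroup L'] [Module R L'] [Module A L'] [IsScalarTower R A L']
    [AddCommGroup L] [Module R L] [Module A L] [IsScalarTower R A L]
    [AddCommGroup K] [Module R K] [Module A K] [IsScalarTower R A K]
    (SM' : HLR R A φ M') (SL' : HLR R A φ L') (SL : HLR R A φ L) (SK : HLR R A φ K)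
    (j : M' → L') (τ : L' → L)
    (hce : IsCentralExt SM' SL' SL j τ)
    (hK : SK.IsPerfect)
    (f g : K → L')
    (hf : IsHLRHom SK SL' f) (hg : IsHLRHom SK SL' g)
    (hfg : ∀ x, τ (f x) = τ (g x)) :
    f = g := by
  obtain ⟨_, hτ, _, _, _, hker⟩ := hce
  obtain ⟨τadd, _, _, _, _⟩ := hτ
  obtain ⟨fadd, fsmul, fbr, _, _⟩ := hf
  obtain ⟨gadd, gsmul, gbr, _, _⟩ := hg
  have f0 : f 0 = 0 := by
    have h := fadd 0 0; rw [add_zero] at h; exact (left_eq_add.mp h)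
  have g0 : g 0 = 0 := by
    have h := gadd 0 0; rw [add_zero] at h; exact (left_eq_add.mp h)
  -- d x := f x - g x lies in the center of L'
  have hcen : ∀ x : K, (f x - g x) ∈ SL'.center := by
    intro x
    apply hker
    have h1 : τ (g x + (f x - g x)) = τ (g x) + τ (f x - g x) := τadd _ _
    rw [add_sub_cancel, hfg x] at h1
    exact (left_eq_add.mp h1)
  -- central elements bracket to zero on both sides
  have hz : ∀ (c : L'), c ∈ SL'.center → ∀ z : L', SL'.bracket c z = 0 := by
    intro c hc z
    have := (hc 1 z).1
    rwa [one_smul] at this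
  have hz' : ∀ (c : L'), c ∈ SL'.center → ∀ z : L', SL'.bracket z c = 0 := by
    intro c hc z
    rw [SL'.skew, hz c hc z, neg_zero]
  -- f and g agree on brackets
  have hbr : ∀ x y : K, f (SK.bracket x y) = g (SK.bracket x y) := by
    intro x y
    have hfx : f x = g x + (f x - g x) := (add_sub_cancel (g x) (f x)).symm
    have hfy : f y = g y + (f y - g y) := (add_sub_cancel (g y) (f y)).symm
    rw [fbr, gbr, hfx, hfy, SL'.add_left, SL'.add_right, SL'.add_right,
      hz _ (hcen x), hz' _ (hcen y), hz _ (hcen x), add_zero, add_zero, add_zero]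
  -- the equalizer is an A-submodule
  let S : Submodule A K :=
    { carrier := {x | f x = g x}
      add_mem' := by
        intro a b ha hb
        simp only [Set.mem_setOf_eq] at *
        rw [fadd, gadd, ha, hb]
      zero_mem' := by simp only [Set.mem_setOf_eq, f0, g0]
      smul_mem' := by
        intro a x hx
        simp only [Set.mem_setOf_eq] at *
        rw [fsmul, gsmul, hx] }
  have hle : Submodule.span A {z : K | ∃ x y, z = SK.bracket x y} ≤ S := by
    apply Submodule.span_le.mpr
    rintro z ⟨x, y, rfl⟩
    exact hbr x y
  funext x
  have hx : x ∈ S := by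
    apply hle
    rw [hK]
    trivial
  exact hx
end

section
/- Assume φ: A → A is surjective. Let (M, α_M) →^i (K, α_K) →^σ (L, α_L) be a central extension of hom-Lie-Rinehart algebras over (A, φ) with (K, α_K) perfect, and let (N, α_N) →^j (L', α_{L'}) →^τ (K, α_K) be a central extension of (K, α_K). Then the composition Ker(σ∘τ) → (L', α_{L'}) →^{σ∘τ} (L, α_L) is an α-central extension of (L, α_L). -/
open TensorProduct Function Set

/-- the composition of two central extensions (the middle algebra being perfect)
is an `α`-central extension, provided `φ` is surjective. -/
theorem statement_5
    {R A : Type} [CommRing R] [CommRing A] [Algebra R A] (φ : A →ₐ[R] A)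
    (hφ : Function.Surjective ⇑φ)
    {M K L N L' : Type}
    [AddCommGroup M] [Module R M] [Module A M] [IsScalarTower R A M]
    [AddCommGroup K] [Module R K] [Module A K] [IsScalarTower R A K]
    [AddCommGroup L] [Module R L] [Module A L] [IsScalarTower R A L]
    [AddCommGroup N] [Module R N] [Module A N] [IsScalarTower R A N]
    [AddCommGroup L'] [Module R L'] [Module A L'] [IsScalarTower R A L']
    (SM : HLR R A φ M) (SK : HLR R A φ K) (SL : HLR R A φ L)
    (SN : HLR R A φ N) (SL' : HLR R A φ L')
    (i : M → K) (σ : K → L) (j : N → L') (τ : L' → K)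
    (h1 : IsCentralExt SM SK SL i σ) (hperf : SK.IsPerfect)
    (h2 : IsCentralExt SN SL' SK j τ) :
    IsHLRHom SL' SL (fun x => σ (τ x)) ∧
    Function.Surjective (fun x => σ (τ x)) ∧
    ∀ x : L', σ (τ x) = 0 → SL'.alpha x ∈ SL'.center := by
  obtain ⟨hi, hσ, hiinj, hσsurj, hrange1, hcent1⟩ := h1
  obtain ⟨hj, hτ, hjinj, hτsurj, hrange2, hcent2⟩ := h2
  obtain ⟨σadd, σsmul, σbr, σal, σrho⟩ := hσ
  obtain ⟨τadd, τsmul, τbr, τal, τrho⟩ := hτ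
  -- τ preserves 0 and subtraction
  have τzero : τ 0 = 0 := by
    have := τsmul 0 0; simpa using this
  have τneg : ∀ x, τ (-x) = - τ x := by
    intro x
    have h := τsmul (-1 : A) x
    simpa using h
  have τsub : ∀ x y, τ (x - y) = τ x - τ y := by
    intro x y
    rw [sub_eq_add_neg, τadd, τneg, sub_eq_add_neg]
  have σzero : σ 0 = 0 := by
    have := σsmul 0 0; simpa using this
  -- alpha of 0
  have αLzero : SL.alpha 0 = 0 := by
    have := SL.alpha_smulR 0 0; simpa using this
  -- Lemma A: if σ (τ w) = 0 then ρ_{L'} w = 0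
  have lemA : ∀ w : L', σ (τ w) = 0 → ∀ a : A, SL'.rho w a = 0 := by
    intro w hw a
    have hmem : τ w ∈ SK.center := hcent1 hw
    have := (hmem a 0).2.2
    rw [← τrho w a, this]
  -- Lemma A': ρ of alpha vanishes too
  have lemA' : ∀ w : L', σ (τ w) = 0 → ∀ a : A, SL'.rho (SL'.alpha w) a = 0 := by
    intro w hw a
    obtain ⟨b, rfl⟩ := hφ a
    rw [SL'.rho_alpha, lemA w hw b, map_zero]
  -- Lemma B: elements of ker τ kill brackets on both sides
  have lemB : ∀ c : L', τ c = 0 → ∀ z : L',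
      SL'.bracket c z = 0 ∧ SL'.bracket z c = 0 := by
    intro c hc z
    have hmem : c ∈ SL'.center := hcent2 hc
    have h1 := (hmem 1 z).1
    rw [one_smul] at h1
    refine ⟨h1, ?_⟩
    rw [SL'.skew, h1, neg_zero]
  -- kernel of σ∘τ elements: τ w is central in K, so brackets with τ w vanish
  have lemK : ∀ w : L', σ (τ w) = 0 → ∀ k : K, SK.bracket (τ w) k = 0 := by
    intro w hw k
    have hmem : τ w ∈ SK.center := hcent1 hw
    have := (hmem 1 k).1
    rwa [one_smul] at this
  -- Lemma C : [α w, [y,z]] = 0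
  have lemC : ∀ w : L', σ (τ w) = 0 → ∀ y z : L',
      SL'.bracket (SL'.alpha w) (SL'.bracket y z) = 0 := by
    intro w hw y z
    have hjac := SL'.hom_jacobi w y z
    have hzw : τ (SL'.bracket z w) = 0 := by
      rw [τbr, SK.skew, lemK w hw, neg_zero]
    have hwy : τ (SL'.bracket w y) = 0 := by
      rw [τbr, lemK w hw]
    have e1 : SL'.bracket (SL'.alpha y) (SL'.bracket z w) = 0 :=
      (lemB _ hzw _).2
    have e2 : SL'.bracket (SL'.alpha z) (SL'.bracket w y) = 0 :=
      (lemB _ hwy _).2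
    rw [e1, e2, add_zero, add_zero] at hjac
    exact hjac
  -- Lemma D : [α w, z'] = 0 for all z'
  have lemD : ∀ w : L', σ (τ w) = 0 → ∀ z' : L',
      SL'.bracket (SL'.alpha w) z' = 0 := by
    intro w hw
    -- predicate on K
    set p : K → Prop := fun k => ∀ z' : L', τ z' = k →
      SL'.bracket (SL'.alpha w) z' = 0 with hp
    have hall : ∀ k : K, p k := by
      intro k
      have hk : k ∈ Submodule.span A {z : K | ∃ x y, z = SK.bracket x y} := by
        rw [hperf]; trivial
      refine Submodule.span_induction ?_ ?_ ?_ ?_ hk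
      · rintro k ⟨x, y, rfl⟩ z' hz'
        obtain ⟨u, hu⟩ := hτsurj x
        obtain ⟨v, hv⟩ := hτsurj y
        have hc : τ (z' - SL'.bracket u v) = 0 := by
          rw [τsub, τbr, hu, hv, hz', sub_self]
        have hdecomp : z' = SL'.bracket u v + (z' - SL'.bracket u v) := by
          abel
        rw [hdecomp, SL'.add_right, lemC w hw u v, (lemB _ hc _).2, add_zero]
      · intro z' hz'
        exact (lemB _ hz' _).2
      · intro k1 k2 _ _ h1 h2 z' hz'
        obtain ⟨z1, hz1⟩ := hτsurj k1
        have hc : τ (z' - z1) = k2 := by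
          rw [τsub, hz1, hz'] ; abel
        have hdecomp : z' = z1 + (z' - z1) := by abel
        rw [hdecomp, SL'.add_right, h1 z1 hz1, h2 _ hc, add_zero]
      · intro a k _ h z' hz'
        obtain ⟨z1, hz1⟩ := hτsurj k
        have hc : τ (z' - a • z1) = 0 := by
          rw [τsub, τsmul, hz1, hz', sub_self]
        have hdecomp : z' = a • z1 + (z' - a • z1) := by abel
        rw [hdecomp, SL'.add_right, (lemB _ hc _).2, add_zero, SL'.leibniz,
          h z1 hz1, lemA' w hw, smul_zero, zero_smul, add_zero]
    intro z'
    exact hall (τ z') z' rfl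
  refine ⟨⟨?_, ?_, ?_, ?_, ?_⟩, ?_, ?_⟩
  · intro x y; simp only [τadd, σadd]
  · intro a x; simp only [τsmul, σsmul]
  · intro x y; simp only [τbr, σbr]
  · intro x; simp only [τal, σal]
  · intro x a; simp only [σrho, τrho]
  · exact hσsurj.comp hτsurj
  · intro x hx a z
    refine ⟨?_, ?_, lemA' x hx a⟩
    · obtain ⟨b, rfl⟩ := hφ a
      have : φ b • SL'.alpha x = SL'.alpha (b • x) := (SL'.alpha_smulA b x).symm
      rw [this]
      apply lemD
      rw [τsmul, σsmul, hx, smul_zero]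
    · obtain ⟨b, rfl⟩ := hφ a
      have : φ b • SL'.alpha (SL'.alpha x) = SL'.alpha (b • SL'.alpha x) :=
        (SL'.alpha_smulA b (SL'.alpha x)).symm
      rw [this]
      apply lemD
      rw [τsmul, σsmul, τal, σal, hx, αLzero, smul_zero]
end

section
/- Assume φ: A → A is surjective. Let (M', α_{M'}) →^j (L', α_{L'}) →^τ (L, α_L) be an α-central extension of hom-Lie-Rinehart algebras over (A, φ) and let (K, α_K) be an α-perfect hom-Lie-Rinehart algebra over (A, φ). If f, g: (K, α_K) → (L', α_{L'}) are homomorphisms over (A, φ) with τ ∘ f = τ ∘ g, then f = g. -/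
open TensorProduct Function Set

/-- two homomorphisms from an `α`-perfect hom-Lie-Rinehart algebra into an
`α`-central extension which agree after projection are equal (`φ` surjective). -/
theorem statement_6
    {R A : Type} [CommRing R] [CommRing A] [Algebra R A] (φ : A →ₐ[R] A)
    (hφ : Function.Surjective ⇑φ)
    {M' L' L K : Type}
    [AddCommGroup M'] [Module R M'] [Module A M'] [IsScalarTower R A M']
    [AddCommGroup L'] [Module R L'] [Module A L'] [IsScalarTower R A L']
    [AddCommGroup L] [Module R L] [Module A L] [IsScalarTower R A L]
    [AddCommGroup K] [Module R K] [Module A K] [IsScalarTower R A K]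
    (SM' : HLR R A φ M') (SL' : HLR R A φ L') (SL : HLR R A φ L) (SK : HLR R A φ K)
    (j : M' → L') (τ : L' → L)
    (hce : IsAlphaCentralExt SM' SL' SL j τ)
    (hK : SK.IsAlphaPerfect)
    (f g : K → L')
    (hf : IsHLRHom SK SL' f) (hg : IsHLRHom SK SL' g)
    (hfg : ∀ x, τ (f x) = τ (g x)) :
    f = g := by
  obtain ⟨hjhom, hτhom, hjinj, hτsurj, hker, hcent⟩ := hce
  obtain ⟨hfadd, hfsmul, hfbr, hfal, hfrho⟩ := hf
  obtain ⟨hgadd, hgsmul, hgbr, hgal, hgrho⟩ := hg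
  obtain ⟨hτadd, hτsmul, hτbr, hτal, hτrho⟩ := hτhom
  -- difference lies in range of j
  have hdiff : ∀ x : K, ∃ m : M', j m = f x - g x := by
    intro x
    have h0 : τ (f x - g x) = 0 := by
      have : f x - g x = f x + (-1 : A) • g x := by
        rw [neg_smul, one_smul]; abel
      rw [this, hτadd, hτsmul, neg_smul, one_smul, hfg x, add_neg_cancel]
    have : f x - g x ∈ Set.range j := by rw [hker]; exact h0
    exact this
  -- key: f and g agree on brackets of alphas
  have hkey : ∀ x y : K, f (SK.bracket (SK.alpha x) (SK.alpha y))
      = g (SK.bracket (SK.alpha x) (SK.alpha y)) := by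
    intro x y
    obtain ⟨m, hm⟩ := hdiff x
    obtain ⟨n, hn⟩ := hdiff y
    have hfx : f x = g x + j m := by rw [hm]; abel
    have hfy : f y = g y + j n := by rw [hn]; abel
    have hcm : j (SM'.alpha m) ∈ SL'.center := hcent m
    have hcn : j (SM'.alpha n) ∈ SL'.center := hcent n
    have hzm : ∀ z : L', SL'.bracket (j (SM'.alpha m)) z = 0 := by
      intro z
      have := (hcm 1 z).1
      rwa [one_smul] at this
    have hzn : ∀ z : L', SL'.bracket z (j (SM'.alpha n)) = 0 := by
      intro z
      have := (hcn 1 z).1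
      rw [one_smul] at this
      rw [SL'.skew, this, neg_zero]
    rw [hfbr, hgbr, hfal, hfal, hgal, hgal, hfx, hfy,
      SL'.alpha_add, SL'.alpha_add, ← hjhom.2.2.2.1, ← hjhom.2.2.2.1,
      SL'.add_left, SL'.add_right, SL'.add_right, hzm, hzn, hzn, add_zero,
      add_zero, add_zero]
  -- the agreement locus is an A-submodule
  have hf0 : f 0 = 0 := by
    have h := hfadd 0 0
    rw [add_zero] at h
    exact left_eq_add.mp h
  have hg0 : g 0 = 0 := by
    have h := hgadd 0 0
    rw [add_zero] at h
    exact left_eq_add.mp h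
  let p : Submodule A K :=
    { carrier := {x | f x = g x}
      add_mem' := by
        intro a b ha hb
        simp only [Set.mem_setOf_eq] at *
        rw [hfadd, hgadd, ha, hb]
      zero_mem' := by
        simp only [Set.mem_setOf_eq]
        rw [hf0, hg0]
      smul_mem' := by
        intro a x hx
        simp only [Set.mem_setOf_eq] at *
        rw [hfsmul, hgsmul, hx] }
  have hspan : Submodule.span A
      {z : K | ∃ x y, z = SK.bracket (SK.alpha x) (SK.alpha y)} ≤ p := by
    apply Submodule.span_le.mpr
    rintro z ⟨x, y, rfl⟩
    exact hkey x y
  have htop : p = ⊤ := top_unique (hK ▸ hspan)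
  funext x
  have : x ∈ p := htop ▸ Submodule.mem_top
  exact this
end

section
/- Assume φ: A → A is surjective. Let (M, α_M) →^i (K, α_K) →^σ (L, α_L) be a central extension of hom-Lie-Rinehart algebras over (A, φ). If this central extension is a universal α-central extension, then (K, α_K) is perfect and every central extension of (K, α_K) splits uniquely in the category of hom-Lie-Rinehart algebras over (A, φ), i.e. for every central extension (N, α_N) →^j (L', α_{L'}) →^τ (K, α_K) there exists a unique homomorphism s: (K, α_K) → (L', α_{L'}) over (A, φ) with τ ∘ s = Id_K. -/
open TensorProduct Function Set

section AuxLemmas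

variable {R A : Type} [CommRing R] [CommRing A] [Algebra R A] {φ : A →ₐ[R] A}

namespace HLR

variable {L : Type} [AddCommGroup L] [Module R L] [Module A L] [IsScalarTower R A L]

lemma bracket_zero_left_s7 (S : HLR R A φ L) (z : L) : S.bracket 0 z = 0 := by
  have h := S.add_left 0 0 z
  rw [add_zero] at h
  exact left_eq_add.mp h

lemma bracket_zero_right (S : HLR R A φ L) (z : L) : S.bracket z 0 = 0 := by
  have h := S.add_right z 0 0
  rw [add_zero] at h
  exact left_eq_add.mp h

lemma alpha_zero_s7 (S : HLR R A φ L) : S.alpha 0 = 0 := by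
  have h := S.alpha_add 0 0
  rw [add_zero] at h
  exact left_eq_add.mp h

lemma alpha_sub (S : HLR R A φ L) (x y : L) : S.alpha (x - y) = S.alpha x - S.alpha y := by
  have h := S.alpha_add (x - y) y
  rw [sub_add_cancel] at h
  exact eq_sub_of_add_eq h.symm

lemma center_bracket_left (S : HLR R A φ L) {x : L} (hx : x ∈ S.center) (z : L) :
    S.bracket x z = 0 := by
  have h := (hx 1 z).1
  rwa [one_smul] at h

lemma center_bracket_right (S : HLR R A φ L) {x : L} (hx : x ∈ S.center) (z : L) :
    S.bracket z x = 0 := by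
  rw [S.skew, S.center_bracket_left hx, neg_zero]

lemma center_rho (S : HLR R A φ L) {x : L} (hx : x ∈ S.center) (a : A) :
    S.rho x a = 0 := (hx a 0).2.2

end HLR

lemma IsHLRHom.map_zero {K L : Type}
    [AddCommGroup K] [Module R K] [Module A K] [IsScalarTower R A K]
    [AddCommGroup L] [Module R L] [Module A L] [IsScalarTower R A L]
    {SK : HLR R A φ K} {SL : HLR R A φ L} {f : K → L}
    (hf : IsHLRHom SK SL f) : f 0 = 0 := by
  have h := hf.1 0 0
  rw [add_zero] at h
  exact left_eq_add.mp h

lemma IsHLRHom.comp {K L N : Type}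
    [AddCommGroup K] [Module R K] [Module A K] [IsScalarTower R A K]
    [AddCommGroup L] [Module R L] [Module A L] [IsScalarTower R A L]
    [AddCommGroup N] [Module R N] [Module A N] [IsScalarTower R A N]
    {SK : HLR R A φ K} {SL : HLR R A φ L} {SN : HLR R A φ N}
    {f : K → L} {g : L → N}
    (hf : IsHLRHom SK SL f) (hg : IsHLRHom SL SN g) :
    IsHLRHom SK SN (fun x => g (f x)) :=
  ⟨fun x y => by simp only [hf.1, hg.1],
   fun a x => by simp only [hf.2.1, hg.2.1],
   fun x y => by simp only [hf.2.2.1, hg.2.2.1],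
   fun x => by simp only [hf.2.2.2.1, hg.2.2.2.1],
   fun x a => by simp only [hg.2.2.2.2, hf.2.2.2.2]⟩

namespace HLR

variable {K : Type} [AddCommGroup K] [Module R K] [Module A K] [IsScalarTower R A K]

/-- The `A`-submodule spanned by all brackets. -/
def bspan (S : HLR R A φ K) : Submodule A K :=
  Submodule.span A {z : K | ∃ x y, z = S.bracket x y}

lemma bracket_mem_bspan (S : HLR R A φ K) (x y : K) : S.bracket x y ∈ S.bspan :=
  Submodule.subset_span ⟨x, y, rfl⟩

lemma alpha_mem_bspan (S : HLR R A φ K) {p : K} (hp : p ∈ S.bspan) :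
    S.alpha p ∈ S.bspan := by
  induction hp using Submodule.span_induction with
  | mem x h =>
    obtain ⟨u, v, rfl⟩ := h
    rw [S.alpha_bracket]
    exact S.bracket_mem_bspan _ _
  | zero => rw [S.alpha_zero_s7]; exact Submodule.zero_mem _
  | add x y hx hy ihx ihy => rw [S.alpha_add]; exact Submodule.add_mem _ ihx ihy
  | smul a x hx ihx => rw [S.alpha_smulA]; exact Submodule.smul_mem _ _ ihx

/-- The map induced by `alpha` on `K ⧸ bspan`. -/
noncomputable def qA (S : HLR R A φ K) : K ⧸ S.bspan → K ⧸ S.bspan := fun q =>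
  Quotient.liftOn q (fun x => Submodule.Quotient.mk (S.alpha x)) (fun a b h => by
    refine (Submodule.Quotient.eq _).mpr ?_
    rw [← S.alpha_sub]
    exact S.alpha_mem_bspan ((Submodule.quotientRel_def S.bspan).mp h))

@[simp] lemma qA_mk (S : HLR R A φ K) (x : K) :
    S.qA (Submodule.Quotient.mk x) = Submodule.Quotient.mk (S.alpha x) := rfl

lemma qA_zero (S : HLR R A φ K) : S.qA 0 = 0 := by
  show S.qA (Submodule.Quotient.mk 0) = 0
  rw [qA_mk, S.alpha_zero_s7]
  rfl

lemma qA_add (S : HLR R A φ K) (q q' : K ⧸ S.bspan) :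
    S.qA (q + q') = S.qA q + S.qA q' := by
  obtain ⟨x, rfl⟩ := Submodule.Quotient.mk_surjective _ q
  obtain ⟨y, rfl⟩ := Submodule.Quotient.mk_surjective _ q'
  rw [← Submodule.Quotient.mk_add, qA_mk, qA_mk, qA_mk, S.alpha_add,
    Submodule.Quotient.mk_add]

lemma qA_smulR (S : HLR R A φ K) (r : R) (q : K ⧸ S.bspan) :
    S.qA (r • q) = r • S.qA q := by
  obtain ⟨x, rfl⟩ := Submodule.Quotient.mk_surjective _ q
  rw [← Submodule.Quotient.mk_smul, qA_mk, qA_mk, S.alpha_smulR,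
    Submodule.Quotient.mk_smul]

lemma qA_smulA (S : HLR R A φ K) (a : A) (q : K ⧸ S.bspan) :
    S.qA (a • q) = φ a • S.qA q := by
  obtain ⟨x, rfl⟩ := Submodule.Quotient.mk_surjective _ q
  rw [← Submodule.Quotient.mk_smul, qA_mk, qA_mk, S.alpha_smulA,
    Submodule.Quotient.mk_smul]

lemma rho_smul_qA (S : HLR R A φ K) (x : K) (a : A) (q : K ⧸ S.bspan) :
    S.rho x a • S.qA q = 0 := by
  obtain ⟨y, rfl⟩ := Submodule.Quotient.mk_surjective _ q
  rw [qA_mk, ← Submodule.Quotient.mk_smul, Submodule.Quotient.mk_eq_zero]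
  have h : S.rho x a • S.alpha y = S.bracket x (a • y) - φ a • S.bracket x y := by
    rw [S.leibniz]; abel
  rw [h]
  exact Submodule.sub_mem _ (S.bracket_mem_bspan _ _)
    (Submodule.smul_mem _ _ (S.bracket_mem_bspan _ _))

/-- The hom-Lie-Rinehart structure on `K × (K ⧸ bspan)`. -/
noncomputable def prodQ (S : HLR R A φ K) : HLR R A φ (K × (K ⧸ S.bspan)) where
  bracket x y := (S.bracket x.1 y.1, 0)
  add_left x y z := by simp [S.add_left]
  add_right x y z := by simp [S.add_right]
  smul_left r x y := by simp [S.smul_left]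
  smul_right r x y := by simp [S.smul_right]
  skew x y := by simp [S.skew x.1 y.1]
  alpha x := (S.alpha x.1, S.qA x.2)
  alpha_add x y := by simp [S.alpha_add, S.qA_add]
  alpha_smulR r x := by simp [S.alpha_smulR, S.qA_smulR]
  rho x a := S.rho x.1 a
  rho_add_left x y a := S.rho_add_left x.1 y.1 a
  rho_smulR_left r x a := S.rho_smulR_left r x.1 a
  rho_add_right x a b := S.rho_add_right x.1 a b
  rho_smulR_right x r a := S.rho_smulR_right x.1 r a
  rho_deriv x a b := S.rho_deriv x.1 a b
  alpha_bracket x y := by simp [S.alpha_bracket, S.qA_zero]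
  hom_jacobi x y z := by
    refine Prod.ext ?_ ?_
    · exact S.hom_jacobi x.1 y.1 z.1
    · simp
  alpha_smulA a x := by simp [S.alpha_smulA, S.qA_smulA]
  rho_alpha x a := S.rho_alpha x.1 a
  rho_bracket x y a := S.rho_bracket x.1 y.1 a
  rho_smulA a x b := S.rho_smulA a x.1 b
  leibniz x a y := by
    refine Prod.ext ?_ ?_
    · exact S.leibniz x.1 a y.1
    · simp [S.rho_smul_qA]

/-- The trivialized hom-Lie-Rinehart structure on `M × (K ⧸ bspan)`. -/
noncomputable def trivProd (S : HLR R A φ K) {M : Type}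
    [AddCommGroup M] [Module R M] [Module A M] [IsScalarTower R A M]
    (SM : HLR R A φ M) : HLR R A φ (M × (K ⧸ S.bspan)) where
  bracket _ _ := 0
  add_left _ _ _ := by simp
  add_right _ _ _ := by simp
  smul_left _ _ _ := by simp
  smul_right _ _ _ := by simp
  skew _ _ := by simp
  alpha x := (SM.alpha x.1, S.qA x.2)
  alpha_add x y := by simp [SM.alpha_add, S.qA_add]
  alpha_smulR r x := by simp [SM.alpha_smulR, S.qA_smulR]
  rho _ _ := 0
  rho_add_left _ _ _ := by simp
  rho_smulR_left _ _ _ := by simp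
  rho_add_right _ _ _ := by simp
  rho_smulR_right _ _ _ := by simp
  rho_deriv _ _ _ := by simp
  alpha_bracket _ _ := by simp [SM.alpha_zero_s7, S.qA_zero]
  hom_jacobi _ _ _ := by simp
  alpha_smulA a x := by simp [SM.alpha_smulA, S.qA_smulA]
  rho_alpha _ _ := by simp
  rho_bracket _ _ _ := by simp
  rho_smulA _ _ _ := by simp
  leibniz _ _ _ := by simp

/-- The sub hom-Lie-Rinehart structure on a closed submodule. -/
def subHLR {L' : Type}
    [AddCommGroup L'] [Module R L'] [Module A L'] [IsScalarTower R A L']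
    (S : HLR R A φ L') (p : Submodule A L')
    (hb : ∀ x ∈ p, ∀ y ∈ p, S.bracket x y ∈ p)
    (ha : ∀ x ∈ p, S.alpha x ∈ p) : HLR R A φ ↥p where
  bracket x y := ⟨S.bracket x y, hb x x.2 y y.2⟩
  add_left x y z := Subtype.ext (by push_cast; exact S.add_left x y z)
  add_right x y z := Subtype.ext (by push_cast; exact S.add_right x y z)
  smul_left r x y := Subtype.ext (by push_cast; exact S.smul_left r x y)
  smul_right r x y := Subtype.ext (by push_cast; exact S.smul_right r x y)
  skew x y := Subtype.ext (by push_cast; exact S.skew x y)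
  alpha x := ⟨S.alpha x, ha x x.2⟩
  alpha_add x y := Subtype.ext (by push_cast; exact S.alpha_add x y)
  alpha_smulR r x := Subtype.ext (by push_cast; exact S.alpha_smulR r x)
  rho x a := S.rho x a
  rho_add_left x y a := by push_cast; exact S.rho_add_left x y a
  rho_smulR_left r x a := by push_cast; exact S.rho_smulR_left r x a
  rho_add_right x a b := S.rho_add_right x a b
  rho_smulR_right x r a := S.rho_smulR_right x r a
  rho_deriv x a b := S.rho_deriv x a b
  alpha_bracket x y := Subtype.ext (S.alpha_bracket x y)
  hom_jacobi x y z := Subtype.ext (by push_cast; exact S.hom_jacobi x y z)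
  alpha_smulA a x := Subtype.ext (by push_cast; exact S.alpha_smulA a x)
  rho_alpha x a := S.rho_alpha x a
  rho_bracket x y a := S.rho_bracket x y a
  rho_smulA a x b := by push_cast; exact S.rho_smulA a x b
  leibniz x a y := Subtype.ext (by push_cast; exact S.leibniz x a y)

end HLR

end AuxLemmas

section PerfectLemma

variable {R A : Type} [CommRing R] [CommRing A] [Algebra R A] {φ : A →ₐ[R] A}
variable {M K L : Type}
  [AddCommGroup M] [Module R M] [Module A M] [IsScalarTower R A M]
  [AddCommGroup K] [Module R K] [Module A K] [IsScalarTower R A K]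
  [AddCommGroup L] [Module R L] [Module A L] [IsScalarTower R A L]

lemma perfect_of_uace (SM : HLR R A φ M) (SK : HLR R A φ K) (SL : HLR R A φ L)
    (i : M → K) (σ : K → L) (hce : IsCentralExt SM SK SL i σ)
    (huniv : IsUniversalAlphaCentralExt SM SK SL i σ) : SK.IsPerfect := by
  obtain ⟨hi, hσ, hinj, hsurj, hrange, hcent⟩ := hce
  have hkerσ : ∀ m : M, σ (i m) = 0 := fun m => by
    have hm : i m ∈ Set.range i := ⟨m, rfl⟩
    rw [hrange] at hm; exact hm
  have hασ : ∀ k : K, σ k = 0 → σ (SK.alpha k) = 0 := fun k hk => by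
    rw [hσ.2.2.2.1, hk, SL.alpha_zero_s7]
  have hace : IsAlphaCentralExt (SK.trivProd SM) SK.prodQ SL
      (fun m : M × (K ⧸ SK.bspan) => (i m.1, m.2)) (fun p => σ p.1) := by
    refine ⟨⟨?_, ?_, ?_, ?_, ?_⟩, ⟨?_, ?_, ?_, ?_, ?_⟩, ?_, ?_, ?_, ?_⟩
    · intro x y
      show (i (x.1 + y.1), x.2 + y.2) = (i x.1, x.2) + (i y.1, y.2)
      rw [hi.1]; rfl
    · intro a x
      show (i (a • x.1), a • x.2) = a • (i x.1, x.2)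
      rw [hi.2.1]; rfl
    · intro x y
      show (i 0, (0 : K ⧸ SK.bspan)) = (SK.bracket (i x.1) (i y.1), 0)
      rw [hi.map_zero, SK.center_bracket_left (hcent (hkerσ x.1))]
    · intro x
      show (i (SM.alpha x.1), SK.qA x.2) = (SK.alpha (i x.1), SK.qA x.2)
      rw [hi.2.2.2.1]
    · intro x a
      show SK.rho (i x.1) a = 0
      exact SK.center_rho (hcent (hkerσ x.1)) a
    · exact fun x y => hσ.1 x.1 y.1
    · exact fun a x => hσ.2.1 a x.1
    · exact fun x y => hσ.2.2.1 x.1 y.1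
    · exact fun x => hσ.2.2.2.1 x.1
    · exact fun x a => hσ.2.2.2.2 x.1 a
    · intro x y hxy
      have hxy' : (i x.1, x.2) = (i y.1, y.2) := hxy
      rw [Prod.mk.injEq] at hxy'
      exact Prod.ext_iff.mpr ⟨hinj hxy'.1, hxy'.2⟩
    · intro l
      obtain ⟨k, hk⟩ := hsurj l
      exact ⟨(k, 0), hk⟩
    · ext x
      constructor
      · rintro ⟨m, rfl⟩
        exact hkerσ m.1
      · intro hx
        have hx1 : x.1 ∈ Set.range i := by rw [hrange]; exact hx
        obtain ⟨m, hm⟩ := hx1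
        exact ⟨(m, x.2), Prod.ext_iff.mpr ⟨hm, rfl⟩⟩
    · intro m
      have him : i (SM.alpha m.1) = SK.alpha (i m.1) := hi.2.2.2.1 m.1
      have hc : SK.alpha (i m.1) ∈ SK.center := hcent (hασ _ (hkerσ m.1))
      intro a z
      refine ⟨?_, ?_, ?_⟩
      · refine Prod.ext ?_ rfl
        show SK.bracket (a • i (SM.alpha m.1)) z.1 = 0
        rw [him]
        exact (hcent (hkerσ m.1) a z.1).2.1
      · refine Prod.ext ?_ rfl
        show SK.bracket (a • SK.alpha (i (SM.alpha m.1))) z.1 = 0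
        rw [him]
        exact (hc a z.1).2.1
      · show SK.rho (i (SM.alpha m.1)) a = 0
        rw [him]
        exact SK.center_rho hc a
  obtain ⟨h, hh, huniq⟩ := huniv.2 _ _ (SK.trivProd SM) SK.prodQ _ _ hace
  have hom1 : IsHLRHom SK SK.prodQ (fun x => (x, (0 : K ⧸ SK.bspan))) := by
    refine ⟨?_, ?_, ?_, ?_, ?_⟩
    · intro x y
      show (x + y, (0 : K ⧸ SK.bspan)) = (x, 0) + (y, 0)
      rw [Prod.mk_add_mk, add_zero]
    · intro a x
      show (a • x, (0 : K ⧸ SK.bspan)) = a • (x, 0)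
      rw [Prod.smul_mk, smul_zero]
    · intro x y; rfl
    · intro x
      show (SK.alpha x, (0 : K ⧸ SK.bspan)) = (SK.alpha x, SK.qA 0)
      rw [SK.qA_zero]
    · intro x a; rfl
  have hom2 : IsHLRHom SK SK.prodQ
      (fun x => (x, (Submodule.Quotient.mk x : K ⧸ SK.bspan))) := by
    refine ⟨?_, ?_, ?_, ?_, ?_⟩
    · intro x y
      show (x + y, (Submodule.Quotient.mk (x + y) : K ⧸ SK.bspan)) = _ + _
      rw [Prod.mk_add_mk, Submodule.Quotient.mk_add]
    · intro a x
      show (a • x, (Submodule.Quotient.mk (a • x) : K ⧸ SK.bspan)) = a • _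
      rw [Prod.smul_mk, Submodule.Quotient.mk_smul]
    · intro x y
      refine Prod.ext rfl ?_
      show (Submodule.Quotient.mk (SK.bracket x y) : K ⧸ SK.bspan) = 0
      exact (Submodule.Quotient.mk_eq_zero _).mpr (SK.bracket_mem_bspan x y)
    · intro x; rfl
    · intro x a; rfl
  have e : (fun x : K => (x, (0 : K ⧸ SK.bspan)))
      = fun x : K => (x, (Submodule.Quotient.mk x : K ⧸ SK.bspan)) :=
    (huniq _ ⟨hom1, fun _ => rfl⟩).trans (huniq _ ⟨hom2, fun _ => rfl⟩).symm
  show Submodule.span A {z : K | ∃ x y, z = SK.bracket x y} = ⊤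
  rw [eq_top_iff]
  intro x _
  have h0 : (0 : K ⧸ SK.bspan) = Submodule.Quotient.mk x := congrArg Prod.snd (congrFun e x)
  exact (Submodule.Quotient.mk_eq_zero _).mp h0.symm

end PerfectLemma

/-- if a central extension of `(L, α_L)` is a universal `α`-central extension,
then the middle algebra `(K, α_K)` is perfect and every central extension of `(K, α_K)`
splits uniquely (`φ` surjective). -/
theorem statement_7
    {R A : Type} [CommRing R] [CommRing A] [Algebra R A] (φ : A →ₐ[R] A)
    (hφ : Function.Surjective ⇑φ)
    {M K L : Type}
    [AddCommGroup M] [Module R M] [Module A M] [IsScalarTower R A M]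
    [AddCommGroup K] [Module R K] [Module A K] [IsScalarTower R A K]
    [AddCommGroup L] [Module R L] [Module A L] [IsScalarTower R A L]
    (SM : HLR R A φ M) (SK : HLR R A φ K) (SL : HLR R A φ L)
    (i : M → K) (σ : K → L)
    (hce : IsCentralExt SM SK SL i σ)
    (huniv : IsUniversalAlphaCentralExt SM SK SL i σ) :
    SK.IsPerfect ∧
    ∀ (N L' : Type)
      [AddCommGroup N] [Module R N] [Module A N] [IsScalarTower R A N]
      [AddCommGroup L'] [Module R L'] [Module A L'] [IsScalarTower R A L']
      (SN : HLR R A φ N) (SL' : HLR R A φ L') (j : N → L') (τ : L' → K),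
      IsCentralExt SN SL' SK j τ →
      ∃! s : K → L', IsHLRHom SK SL' s ∧ ∀ x, τ (s x) = x := by
  have hperf : SK.IsPerfect := perfect_of_uace SM SK SL i σ hce huniv
  have hperf' : Submodule.span A {z : K | ∃ x y, z = SK.bracket x y} = ⊤ := hperf
  refine ⟨hperf, ?_⟩
  intro N L' _ _ _ _ _ _ _ _ SN SL' j τ hce'
  obtain ⟨hi, hσ, hiinj, hσsurj, hirange, hcentK⟩ := hce
  obtain ⟨hj, hτ, hjinj, hτsurj, hjrange, hcentL'⟩ := hce'
  have hσ0 : σ 0 = 0 := hσ.map_zero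
  have hSTadd : ∀ x y : L', σ (τ (x + y)) = σ (τ x) + σ (τ y) := fun x y => by
    rw [hτ.1, hσ.1]
  have hSTsmul : ∀ (a : A) (x : L'), σ (τ (a • x)) = a • σ (τ x) := fun a x => by
    rw [hτ.2.1, hσ.2.1]
  have hαST : ∀ x : L', σ (τ x) = 0 → σ (τ (SL'.alpha x)) = 0 := fun x hx => by
    rw [hτ.2.2.2.1, hσ.2.2.2.1, hx, SL.alpha_zero_s7]
  have hbrK : ∀ x y : L', σ (τ x) = 0 → τ (SL'.bracket x y) = 0 := fun x y hx => by
    rw [hτ.2.2.1, SK.center_bracket_left (hcentK hx)]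
  have claim0 : ∀ x : L', σ (τ x) = 0 → ∀ b, SL'.rho (SL'.alpha x) b = 0 := by
    intro x hx b
    obtain ⟨a, rfl⟩ := hφ b
    rw [SL'.rho_alpha, ← hτ.2.2.2.2, SK.center_rho (hcentK hx), map_zero]
  have claim1 : ∀ x : L', σ (τ x) = 0 → ∀ z, SL'.bracket (SL'.alpha x) z = 0 := by
    intro x hx
    have hbr : ∀ u v : L', SL'.bracket (SL'.alpha x) (SL'.bracket u v) = 0 := by
      intro u v
      have hjac := SL'.hom_jacobi x u v
      have h1 : SL'.bracket (SL'.alpha u) (SL'.bracket v x) = 0 := by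
        have hvx : SL'.bracket v x ∈ SL'.center := hcentL' (by
          show τ (SL'.bracket v x) = 0
          rw [hτ.2.2.1, SK.center_bracket_right (hcentK hx)])
        exact SL'.center_bracket_right hvx _
      have h2 : SL'.bracket (SL'.alpha v) (SL'.bracket x u) = 0 := by
        have hxu : SL'.bracket x u ∈ SL'.center := hcentL' (by
          show τ (SL'.bracket x u) = 0
          rw [hbrK x u hx])
        exact SL'.center_bracket_right hxu _
      rw [h1, h2, add_zero, add_zero] at hjac
      exact hjac
    let Ann : Submodule A L' :=
      { carrier := {z | SL'.bracket (SL'.alpha x) z = 0}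
        add_mem' := fun {u v} hu hv => by
          show SL'.bracket (SL'.alpha x) (u + v) = 0
          rw [SL'.add_right, show SL'.bracket (SL'.alpha x) u = 0 from hu,
            show SL'.bracket (SL'.alpha x) v = 0 from hv, add_zero]
        zero_mem' := SL'.bracket_zero_right _
        smul_mem' := fun a z hz => by
          show SL'.bracket (SL'.alpha x) (a • z) = 0
          rw [SL'.leibniz, show SL'.bracket (SL'.alpha x) z = 0 from hz, smul_zero,
            claim0 x hx a, zero_smul, add_zero] }
    let τl : L' →ₗ[A] K := { toFun := τ, map_add' := hτ.1, map_smul' := hτ.2.1 }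
    intro z
    have htop : z ∈ (Submodule.span A {w : L' | ∃ u v, w = SL'.bracket u v}
        ⊔ LinearMap.ker τl) := by
      have h1 : Submodule.span A {k : K | ∃ u v, k = SK.bracket u v}
          ≤ Submodule.map τl (Submodule.span A {w : L' | ∃ u v, w = SL'.bracket u v}) := by
        rw [Submodule.map_span]
        refine Submodule.span_mono ?_
        rintro k ⟨u, v, rfl⟩
        obtain ⟨u', hu⟩ := hτsurj u
        obtain ⟨v', hv⟩ := hτsurj v
        refine ⟨SL'.bracket u' v', ⟨u', v', rfl⟩, ?_⟩
        show τ (SL'.bracket u' v') = SK.bracket u v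
        rw [hτ.2.2.1, hu, hv]
      have hz : τl z ∈ Submodule.map τl
          (Submodule.span A {w : L' | ∃ u v, w = SL'.bracket u v}) :=
        h1 (by rw [hperf']; exact Submodule.mem_top)
      obtain ⟨w, hw, hwz⟩ := hz
      have hker : z - w ∈ LinearMap.ker τl := by
        rw [LinearMap.mem_ker, map_sub, hwz, sub_self]
      have hzw : z = w + (z - w) := by abel
      rw [hzw]
      exact Submodule.add_mem _ (Submodule.mem_sup_left hw) (Submodule.mem_sup_right hker)
    have hAnn : (Submodule.span A {w : L' | ∃ u v, w = SL'.bracket u v}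
        ⊔ LinearMap.ker τl) ≤ Ann := by
      refine sup_le ?_ ?_
      · rw [Submodule.span_le]
        rintro w ⟨u, v, rfl⟩
        exact hbr u v
      · intro c hc
        have hcc : c ∈ SL'.center := hcentL' (LinearMap.mem_ker.mp hc)
        exact SL'.center_bracket_right hcc _
    exact hAnn htop
  have claim2 : ∀ x : L', σ (τ x) = 0 → SL'.alpha x ∈ SL'.center := by
    intro x hx a z
    obtain ⟨a', rfl⟩ := hφ a
    have hx1 : σ (τ (a' • x)) = 0 := by rw [hSTsmul, hx, smul_zero]
    have hx2 : σ (τ (a' • SL'.alpha x)) = 0 := by rw [hSTsmul, hαST x hx, smul_zero]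
    refine ⟨?_, ?_, ?_⟩
    · rw [← SL'.alpha_smulA]
      exact claim1 _ hx1 z
    · rw [← SL'.alpha_smulA]
      exact claim1 _ hx2 z
    · exact claim0 x hx (φ a')
  let Msub : Submodule A L' :=
    { carrier := {z | σ (τ z) = 0}
      add_mem' := fun {u v} hu hv => by
        show σ (τ (u + v)) = 0
        rw [hSTadd, show σ (τ u) = 0 from hu, show σ (τ v) = 0 from hv, add_zero]
      zero_mem' := by
        show σ (τ 0) = 0
        rw [hτ.map_zero, hσ0]
      smul_mem' := fun a z hz => by
        show σ (τ (a • z)) = 0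
        rw [hSTsmul, show σ (τ z) = 0 from hz, smul_zero] }
  have hb : ∀ u ∈ Msub, ∀ v ∈ Msub, SL'.bracket u v ∈ Msub := fun u hu v _ => by
    show σ (τ (SL'.bracket u v)) = 0
    rw [hbrK u v hu, hσ0]
  have ha : ∀ u ∈ Msub, SL'.alpha u ∈ Msub := fun u hu => hαST u hu
  have hace2 : IsAlphaCentralExt (SL'.subHLR Msub hb ha) SL' SL
      (fun m : ↥Msub => (m : L')) (fun z => σ (τ z)) := by
    refine ⟨⟨fun x y => rfl, fun a x => rfl, fun x y => rfl, fun x => rfl,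
      fun x a => rfl⟩, hτ.comp hσ, Subtype.val_injective, ?_, ?_, ?_⟩
    · intro l
      obtain ⟨k, hk⟩ := hσsurj l
      obtain ⟨z, hz⟩ := hτsurj k
      exact ⟨z, by show σ (τ z) = l; rw [hz, hk]⟩
    · exact Subtype.range_coe
    · intro m
      exact claim2 m.1 m.2
  obtain ⟨h, ⟨hhom, hcomm⟩, huniq2⟩ :=
    huniv.2 (↥Msub) L' (SL'.subHLR Msub hb ha) SL' _ _ hace2
  have hkerσ : ∀ m : M, σ (i m) = 0 := fun m => by
    have hm : i m ∈ Set.range i := ⟨m, rfl⟩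
    rw [hirange] at hm; exact hm
  have hace0 : IsAlphaCentralExt SM SK SL i σ := by
    refine ⟨hi, hσ, hiinj, hσsurj, hirange, fun m => ?_⟩
    rw [hi.2.2.2.1 m]
    refine hcentK ?_
    show σ (SK.alpha (i m)) = 0
    rw [hσ.2.2.2.1, hkerσ, SL.alpha_zero_s7]
  obtain ⟨f, _, funiq⟩ := huniv.2 M K SM SK i σ hace0
  have hid : (fun x : K => τ (h x)) = fun x : K => x := by
    have hA : (fun x : K => τ (h x)) = f := funiq _ ⟨hhom.comp hτ, fun x => hcomm x⟩
    have hB : (fun x : K => x) = f :=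
      funiq _ ⟨⟨fun _ _ => rfl, fun _ _ => rfl, fun _ _ => rfl, fun _ => rfl,
        fun _ _ => rfl⟩, fun _ => rfl⟩
    rw [hA, hB]
  refine ⟨h, ⟨hhom, fun x => congrFun hid x⟩, ?_⟩
  rintro s ⟨shom, hs⟩
  exact huniq2 s ⟨shom, fun x => by show σ (τ (s x)) = σ x; rw [hs x]⟩
end

section
/- Assume φ: A → A is surjective. Let (M, α_M) →^i (K, α_K) →^σ (L, α_L) be a central extension of hom-Lie-Rinehart algebras over (A, φ), and let (N, α_N) →^j (L', α_{L'}) →^τ (K, α_K) be a universal α-central extension of (K, α_K). Then the composition Ker(σ∘τ) → (L', α_{L'}) →^{σ∘τ} (L, α_L) is an α-central extension which is universal in the following sense: for every central extension (H, α_H) →^k (F, α_F) →^γ (L, α_L) there exists a unique homomorphism h: (L', α_{L'}) → (F, α_F) over (A, φ) with γ ∘ h = σ ∘ τ. -/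
open TensorProduct Function Set

namespace S9

variable {R A : Type} [CommRing R] [CommRing A] [Algebra R A] {φ : A →ₐ[R] A}

section basic
variable {X : Type} [AddCommGroup X] [Module R X] [Module A X] [IsScalarTower R A X]
  (S : HLR R A φ X)

lemma alpha_zero : S.alpha 0 = 0 := by
  have h : S.alpha 0 = S.alpha 0 + S.alpha 0 := by simpa using S.alpha_add 0 0
  exact right_eq_add.mp h

lemma bracket_zero_left (y : X) : S.bracket 0 y = 0 := by
  have h : S.bracket 0 y = S.bracket 0 y + S.bracket 0 y := by simpa using S.add_left 0 0 y
  exact right_eq_add.mp h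

lemma bracket_zero_right (x : X) : S.bracket x 0 = 0 := by
  have h : S.bracket x 0 = S.bracket x 0 + S.bracket x 0 := by simpa using S.add_right x 0 0
  exact right_eq_add.mp h

lemma alpha_sub (x y : X) : S.alpha (x - y) = S.alpha x - S.alpha y :=
  (AddMonoidHom.mk' S.alpha S.alpha_add).map_sub x y

lemma bracket_central_left {c : X} (hc : c ∈ S.center) (z : X) : S.bracket c z = 0 := by
  have h := (hc 1 z).1; rwa [one_smul] at h

lemma bracket_central_right {c : X} (hc : c ∈ S.center) (z : X) : S.bracket z c = 0 := by
  rw [S.skew, bracket_central_left S hc z, neg_zero]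

lemma center_smul {c : X} (hc : c ∈ S.center) (a : A) : a • c ∈ S.center := by
  intro b z
  refine ⟨?_, ?_, ?_⟩
  · rw [smul_smul]; exact (hc (b * a) z).1
  · rw [S.alpha_smulA, smul_smul]; exact (hc (b * φ a) z).2.1
  · rw [S.rho_smulA, (hc b z).2.2, mul_zero]

end basic

section homs
variable {X Y Z : Type}
  [AddCommGroup X] [Module R X] [Module A X] [IsScalarTower R A X]
  [AddCommGroup Y] [Module R Y] [Module A Y] [IsScalarTower R A Y]
  [AddCommGroup Z] [Module R Z] [Module A Z] [IsScalarTower R A Z]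

lemma hom_zero {SX : HLR R A φ X} {SY : HLR R A φ Y} {f : X → Y}
    (hf : IsHLRHom SX SY f) : f 0 = 0 := by
  have h : f 0 = f 0 + f 0 := by simpa using hf.1 0 0
  exact right_eq_add.mp h

lemma hom_comp {SX : HLR R A φ X} {SY : HLR R A φ Y} {SZ : HLR R A φ Z}
    {f : X → Y} {g : Y → Z} (hf : IsHLRHom SX SY f) (hg : IsHLRHom SY SZ g) :
    IsHLRHom SX SZ (fun x => g (f x)) := by
  obtain ⟨fa, fs, fb, fal, fr⟩ := hf
  obtain ⟨ga, gs, gb, gal, gr⟩ := hg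
  exact ⟨fun x y => by simp only []; rw [fa, ga], fun a x => by simp only []; rw [fs, gs],
    fun x y => by simp only []; rw [fb, gb], fun x => by simp only []; rw [fal, gal],
    fun x a => by simp only []; rw [gr, fr]⟩

end homs

section restrict
variable {X : Type} [AddCommGroup X] [Module R X] [Module A X] [IsScalarTower R A X]

/-- Restrict an HLR structure to a bracket- and alpha-closed `A`-submodule. -/
def restrictHLR (S : HLR R A φ X) (s : Submodule A X)
    (hb : ∀ x y : s, S.bracket (x : X) (y : X) ∈ s)
    (ha : ∀ x : s, S.alpha (x : X) ∈ s) : HLR R A φ s where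
  bracket x y := ⟨S.bracket x y, hb x y⟩
  add_left x y z := Subtype.ext (by simpa using S.add_left x y z)
  add_right x y z := Subtype.ext (by simpa using S.add_right x y z)
  smul_left r x y := Subtype.ext (by simpa using S.smul_left r x y)
  smul_right r x y := Subtype.ext (by simpa using S.smul_right r x y)
  skew x y := Subtype.ext (by simpa using S.skew x y)
  alpha x := ⟨S.alpha x, ha x⟩
  alpha_add x y := Subtype.ext (by simpa using S.alpha_add x y)
  alpha_smulR r x := Subtype.ext (by simpa using S.alpha_smulR r x)
  rho x a := S.rho x a
  rho_add_left x y a := by simpa using S.rho_add_left x y a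
  rho_smulR_left r x a := by simpa using S.rho_smulR_left r x a
  rho_add_right x a b := S.rho_add_right x a b
  rho_smulR_right x r a := S.rho_smulR_right x r a
  rho_deriv x a b := S.rho_deriv x a b
  alpha_bracket x y := Subtype.ext (by simpa using S.alpha_bracket x y)
  hom_jacobi x y z := Subtype.ext (by simpa using S.hom_jacobi x y z)
  alpha_smulA a x := Subtype.ext (by simpa using S.alpha_smulA a x)
  rho_alpha x a := S.rho_alpha x a
  rho_bracket x y a := S.rho_bracket x y a
  rho_smulA a x b := by simpa using S.rho_smulA a x b
  leibniz x a y := Subtype.ext (by simpa using S.leibniz x a y)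

/-- The kernel of an additive `A`-linear map, as a submodule. -/
def kerPullSub {K : Type} [AddCommGroup K] [Module A K] (τ' : X → K)
    (hadd : ∀ x y, τ' (x + y) = τ' x + τ' y)
    (hsmul : ∀ (a : A) (x : X), τ' (a • x) = a • τ' x) : Submodule A X where
  carrier := {x | τ' x = 0}
  add_mem' := by
    intro a b ha hb
    simp only [Set.mem_setOf_eq] at *
    rw [hadd, ha, hb, add_zero]
  zero_mem' := by
    show τ' 0 = 0
    have h : τ' 0 = τ' 0 + τ' 0 := by simpa using hadd 0 0
    exact right_eq_add.mp h
  smul_mem' := by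
    intro a x hx
    simp only [Set.mem_setOf_eq] at *
    rw [hsmul, hx, smul_zero]

end restrict

section prodQ
variable {L' : Type} [AddCommGroup L'] [Module R L'] [Module A L'] [IsScalarTower R A L']

/-- The `A`-span of brackets. -/
def brSpan (S : HLR R A φ L') : Submodule A L' :=
  Submodule.span A {z : L' | ∃ x y, z = S.bracket x y}

lemma alpha_mem_brSpan (S : HLR R A φ L') {v : L'} (hv : v ∈ brSpan S) :
    S.alpha v ∈ brSpan S := by
  induction hv using Submodule.span_induction with
  | mem x hx =>
      obtain ⟨a, b, rfl⟩ := hx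
      exact Submodule.subset_span ⟨S.alpha a, S.alpha b, S.alpha_bracket a b⟩
  | zero => rw [alpha_zero]; exact (brSpan S).zero_mem
  | add x y hx hy ihx ihy => rw [S.alpha_add]; exact add_mem ihx ihy
  | smul a x hx ih => rw [S.alpha_smulA]; exact Submodule.smul_mem _ _ ih

/-- The twist induced on the quotient by the bracket span. -/
def qAlpha (S : HLR R A φ L') : (L' ⧸ brSpan S) → (L' ⧸ brSpan S) :=
  Quotient.map' S.alpha (by
    intro x y h
    have h' : x - y ∈ brSpan S := (Submodule.quotientRel_def _).mp h
    have : S.alpha x - S.alpha y ∈ brSpan S := by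
      rw [← alpha_sub]; exact alpha_mem_brSpan S h'
    exact (Submodule.quotientRel_def _).mpr this)

lemma qAlpha_mk (S : HLR R A φ L') (x : L') :
    qAlpha S (Submodule.Quotient.mk x) = Submodule.Quotient.mk (S.alpha x) :=
  Quotient.map'_mk'' _ _ _

lemma qAlpha_zero (S : HLR R A φ L') : qAlpha S 0 = 0 := by
  have h0 : (0 : L' ⧸ brSpan S) = Submodule.Quotient.mk 0 := rfl
  rw [h0, qAlpha_mk, alpha_zero]

lemma qAlpha_add (S : HLR R A φ L') (p q : L' ⧸ brSpan S) :
    qAlpha S (p + q) = qAlpha S p + qAlpha S q := by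
  obtain ⟨x, rfl⟩ := Submodule.Quotient.mk_surjective _ p
  obtain ⟨y, rfl⟩ := Submodule.Quotient.mk_surjective _ q
  rw [← Submodule.Quotient.mk_add, qAlpha_mk, qAlpha_mk, qAlpha_mk, S.alpha_add,
    Submodule.Quotient.mk_add]

lemma qAlpha_smulR (S : HLR R A φ L') (r : R) (p : L' ⧸ brSpan S) :
    qAlpha S (r • p) = r • qAlpha S p := by
  obtain ⟨x, rfl⟩ := Submodule.Quotient.mk_surjective _ p
  rw [← Submodule.Quotient.mk_smul, qAlpha_mk, qAlpha_mk, S.alpha_smulR,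
    Submodule.Quotient.mk_smul]

lemma qAlpha_smulA (S : HLR R A φ L') (a : A) (p : L' ⧸ brSpan S) :
    qAlpha S (a • p) = φ a • qAlpha S p := by
  obtain ⟨x, rfl⟩ := Submodule.Quotient.mk_surjective _ p
  rw [← Submodule.Quotient.mk_smul, qAlpha_mk, qAlpha_mk, S.alpha_smulA,
    Submodule.Quotient.mk_smul]

lemma rho_smul_qAlpha (S : HLR R A φ L') (x : L') (a : A) (q : L' ⧸ brSpan S) :
    S.rho x a • qAlpha S q = 0 := by
  obtain ⟨y, rfl⟩ := Submodule.Quotient.mk_surjective _ q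
  rw [qAlpha_mk, ← Submodule.Quotient.mk_smul, Submodule.Quotient.mk_eq_zero]
  have h : S.rho x a • S.alpha y = S.bracket x (a • y) - φ a • S.bracket x y := by
    rw [S.leibniz]; abel
  rw [h]
  exact sub_mem (Submodule.subset_span ⟨x, a • y, rfl⟩)
    (Submodule.smul_mem _ _ (Submodule.subset_span ⟨x, y, rfl⟩))

/-- HLR structure on `L' × (L'/[L',L'])` with trivial second-component bracket. -/
def prodQHLR (S : HLR R A φ L') : HLR R A φ (L' × (L' ⧸ brSpan S)) where
  bracket x y := (S.bracket x.1 y.1, 0)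
  add_left x y z := by
    refine Prod.ext ?_ (by simp)
    simpa using S.add_left x.1 y.1 z.1
  add_right x y z := by
    refine Prod.ext ?_ (by simp)
    simpa using S.add_right x.1 y.1 z.1
  smul_left r x y := by
    refine Prod.ext ?_ (by simp)
    simpa using S.smul_left r x.1 y.1
  smul_right r x y := by
    refine Prod.ext ?_ (by simp)
    simpa using S.smul_right r x.1 y.1
  skew x y := by
    refine Prod.ext ?_ (by simp)
    simpa using S.skew x.1 y.1
  alpha p := (S.alpha p.1, qAlpha S p.2)
  alpha_add x y := by
    refine Prod.ext ?_ ?_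
    · simpa using S.alpha_add x.1 y.1
    · simpa using qAlpha_add S x.2 y.2
  alpha_smulR r x := by
    refine Prod.ext ?_ ?_
    · simpa using S.alpha_smulR r x.1
    · simpa using qAlpha_smulR S r x.2
  rho p a := S.rho p.1 a
  rho_add_left x y a := by simpa using S.rho_add_left x.1 y.1 a
  rho_smulR_left r x a := by simpa using S.rho_smulR_left r x.1 a
  rho_add_right x a b := S.rho_add_right x.1 a b
  rho_smulR_right x r a := S.rho_smulR_right x.1 r a
  rho_deriv x a b := S.rho_deriv x.1 a b
  alpha_bracket x y := by
    refine Prod.ext ?_ ?_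
    · simpa using S.alpha_bracket x.1 y.1
    · simpa using qAlpha_zero S
  hom_jacobi x y z := by
    refine Prod.ext ?_ (by simp)
    simpa using S.hom_jacobi x.1 y.1 z.1
  alpha_smulA a x := by
    refine Prod.ext ?_ ?_
    · simpa using S.alpha_smulA a x.1
    · simpa using qAlpha_smulA S a x.2
  rho_alpha x a := S.rho_alpha x.1 a
  rho_bracket x y a := S.rho_bracket x.1 y.1 a
  rho_smulA a x b := by simpa using S.rho_smulA a x.1 b
  leibniz x a y := by
    refine Prod.ext ?_ ?_
    · simpa using S.leibniz x.1 a y.1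
    · simp [rho_smul_qAlpha S x.1 a y.2]

@[simp] lemma prodQHLR_bracket (S : HLR R A φ L') (x y : L' × (L' ⧸ brSpan S)) :
    (prodQHLR S).bracket x y = (S.bracket x.1 y.1, 0) := rfl

@[simp] lemma prodQHLR_alpha (S : HLR R A φ L') (p : L' × (L' ⧸ brSpan S)) :
    (prodQHLR S).alpha p = (S.alpha p.1, qAlpha S p.2) := rfl

@[simp] lemma prodQHLR_rho (S : HLR R A φ L') (p : L' × (L' ⧸ brSpan S)) (a : A) :
    (prodQHLR S).rho p a = S.rho p.1 a := rfl

end prodQ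

section pullback
variable {F K L : Type}
  [AddCommGroup F] [Module R F] [Module A F] [IsScalarTower R A F]
  [AddCommGroup K] [Module R K] [Module A K] [IsScalarTower R A K]
  [AddCommGroup L] [Module R L] [Module A L] [IsScalarTower R A L]
  (SF : HLR R A φ F) (SK : HLR R A φ K) (SL : HLR R A φ L)
  (γ : F → L) (σ : K → L) (hγ : IsHLRHom SF SL γ) (hσ : IsHLRHom SK SL σ)

/-- The pullback `F ×_L K` as a submodule of `F × K`. -/
def pbSub : Submodule A (F × K) where
  carrier := {p | γ p.1 = σ p.2}
  add_mem' := by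
    intro p q hp hq
    simp only [Set.mem_setOf_eq] at *
    show γ (p + q).1 = σ (p + q).2
    rw [Prod.fst_add, Prod.snd_add, hγ.1, hσ.1, hp, hq]
  zero_mem' := by
    show γ (0 : F × K).1 = σ (0 : F × K).2
    show γ 0 = σ 0
    rw [hom_zero hγ, hom_zero hσ]
  smul_mem' := by
    intro a p hp
    simp only [Set.mem_setOf_eq] at *
    show γ (a • p).1 = σ (a • p).2
    rw [Prod.smul_fst, Prod.smul_snd, hγ.2.1, hσ.2.1, hp]

lemma pbSub_mem {p : F × K} : p ∈ pbSub SF SK SL γ σ hγ hσ ↔ γ p.1 = σ p.2 := Iff.rfl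

/-- HLR structure on the pullback. -/
def pbHLR : HLR R A φ ↥(pbSub SF SK SL γ σ hγ hσ) where
  bracket p q := ⟨(SF.bracket (p : F × K).1 (q : F × K).1,
      SK.bracket (p : F × K).2 (q : F × K).2), by
    show γ _ = σ _
    rw [hγ.2.2.1, hσ.2.2.1, (pbSub_mem SF SK SL γ σ hγ hσ).mp p.2,
      (pbSub_mem SF SK SL γ σ hγ hσ).mp q.2]⟩
  add_left x y z := by
    apply Subtype.ext
    refine Prod.ext ?_ ?_ <;> simp [SF.add_left, SK.add_left]
  add_right x y z := by
    apply Subtype.ext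
    refine Prod.ext ?_ ?_ <;> simp [SF.add_right, SK.add_right]
  smul_left r x y := by
    apply Subtype.ext
    refine Prod.ext ?_ ?_ <;> simp [SF.smul_left, SK.smul_left]
  smul_right r x y := by
    apply Subtype.ext
    refine Prod.ext ?_ ?_ <;> simp [SF.smul_right, SK.smul_right]
  skew x y := by
    apply Subtype.ext
    refine Prod.ext ?_ ?_ <;> simp [SF.skew ((x : F × K).1), SK.skew ((x : F × K).2)]
  alpha p := ⟨(SF.alpha (p : F × K).1, SK.alpha (p : F × K).2), by
    show γ _ = σ _
    rw [hγ.2.2.2.1, hσ.2.2.2.1, (pbSub_mem SF SK SL γ σ hγ hσ).mp p.2]⟩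
  alpha_add x y := by
    apply Subtype.ext
    refine Prod.ext ?_ ?_ <;> simp [SF.alpha_add, SK.alpha_add]
  alpha_smulR r x := by
    apply Subtype.ext
    refine Prod.ext ?_ ?_ <;> simp [SF.alpha_smulR, SK.alpha_smulR]
  rho p a := SF.rho (p : F × K).1 a
  rho_add_left x y a := by simpa using SF.rho_add_left (x : F × K).1 (y : F × K).1 a
  rho_smulR_left r x a := by simpa using SF.rho_smulR_left r (x : F × K).1 a
  rho_add_right x a b := SF.rho_add_right _ a b
  rho_smulR_right x r a := SF.rho_smulR_right _ r a
  rho_deriv x a b := SF.rho_deriv _ a b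
  alpha_bracket x y := by
    apply Subtype.ext
    refine Prod.ext ?_ ?_ <;> simp [SF.alpha_bracket, SK.alpha_bracket]
  hom_jacobi x y z := by
    apply Subtype.ext
    refine Prod.ext ?_ ?_ <;>
      simp [SF.hom_jacobi ((x : F × K).1) ((y : F × K).1) ((z : F × K).1),
        SK.hom_jacobi ((x : F × K).2) ((y : F × K).2) ((z : F × K).2)]
  alpha_smulA a x := by
    apply Subtype.ext
    refine Prod.ext ?_ ?_ <;> simp [SF.alpha_smulA, SK.alpha_smulA]
  rho_alpha x a := SF.rho_alpha _ a
  rho_bracket x y a := SF.rho_bracket _ _ a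
  rho_smulA a x b := by simpa using SF.rho_smulA a (x : F × K).1 b
  leibniz x a y := by
    apply Subtype.ext
    have hr : SF.rho (x : F × K).1 a = SK.rho (x : F × K).2 a := by
      rw [← hγ.2.2.2.2, ← hσ.2.2.2.2, (pbSub_mem SF SK SL γ σ hγ hσ).mp x.2]
    refine Prod.ext ?_ ?_
    · simpa using SF.leibniz (x : F × K).1 a (y : F × K).1
    · simp only [Submodule.coe_add, SetLike.val_smul, Prod.smul_snd, Prod.snd_add]
      rw [hr]
      simpa using SK.leibniz (x : F × K).2 a (y : F × K).2

end pullback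

end S9

/-- composing a central extension of `(L, α_L)` with a universal `α`-central
extension of its middle algebra yields an `α`-central extension of `(L, α_L)` which is
universal with respect to central extensions of `(L, α_L)` (`φ` surjective). -/
theorem statement_9
    {R A : Type} [CommRing R] [CommRing A] [Algebra R A] (φ : A →ₐ[R] A)
    (hφ : Function.Surjective ⇑φ)
    {M K L N L' : Type}
    [AddCommGroup M] [Module R M] [Module A M] [IsScalarTower R A M]
    [AddCommGroup K] [Module R K] [Module A K] [IsScalarTower R A K]
    [AddCommGroup L] [Module R L] [Module A L] [IsScalarTower R A L]
    [AddCommGroup N] [Module R N] [Module A N] [IsScalarTower R A N]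
    [AddCommGroup L'] [Module R L'] [Module A L'] [IsScalarTower R A L']
    (SM : HLR R A φ M) (SK : HLR R A φ K) (SL : HLR R A φ L)
    (SN : HLR R A φ N) (SL' : HLR R A φ L')
    (i : M → K) (σ : K → L) (j : N → L') (τ : L' → K)
    (h1 : IsCentralExt SM SK SL i σ)
    (h2 : IsUniversalAlphaCentralExt SN SL' SK j τ) :
    (IsHLRHom SL' SL (fun x => σ (τ x)) ∧
     Function.Surjective (fun x => σ (τ x)) ∧
     ∀ x : L', σ (τ x) = 0 → SL'.alpha x ∈ SL'.center) ∧
    ∀ (H F : Type)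
      [AddCommGroup H] [Module R H] [Module A H] [IsScalarTower R A H]
      [AddCommGroup F] [Module R F] [Module A F] [IsScalarTower R A F]
      (SH : HLR R A φ H) (SF : HLR R A φ F) (k : H → F) (γ : F → L),
      IsCentralExt SH SF SL k γ →
      ∃! h : L' → F, IsHLRHom SL' SF h ∧ ∀ x, γ (h x) = σ (τ x) := by
  obtain ⟨hihom, hσhom, hiinj, hσsurj, hirange, hσcent⟩ := h1
  obtain ⟨⟨hjhom, hτhom, hjinj, hτsurj, hjrange, hτcent⟩, huniv⟩ := h2
  -- Step 1: L' is perfect.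
  have hperf : S9.brSpan SL' = ⊤ := by
    let SPQ := S9.prodQHLR SL'
    let τ' : (L' × (L' ⧸ S9.brSpan SL')) → K := fun v => τ v.1
    have τ'add : ∀ x y, τ' (x + y) = τ' x + τ' y := fun x y => hτhom.1 x.1 y.1
    have τ'smul : ∀ (a : A) (x : L' × (L' ⧸ S9.brSpan SL')), τ' (a • x) = a • τ' x :=
      fun a x => hτhom.2.1 a x.1
    let M0 : Submodule A (L' × (L' ⧸ S9.brSpan SL')) := S9.kerPullSub τ' τ'add τ'smul
    have hb0 : ∀ x y : M0,
        SPQ.bracket (x : L' × (L' ⧸ S9.brSpan SL')) (y : L' × (L' ⧸ S9.brSpan SL')) ∈ M0 := by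
      intro x y
      show τ (SL'.bracket (x : L' × (L' ⧸ S9.brSpan SL')).1
        (y : L' × (L' ⧸ S9.brSpan SL')).1) = 0
      rw [hτhom.2.2.1, show τ (x : L' × (L' ⧸ S9.brSpan SL')).1 = 0 from x.2,
        S9.bracket_zero_left]
    have ha0 : ∀ x : M0, SPQ.alpha (x : L' × (L' ⧸ S9.brSpan SL')) ∈ M0 := by
      intro x
      show τ (SL'.alpha (x : L' × (L' ⧸ S9.brSpan SL')).1) = 0
      rw [hτhom.2.2.2.1, show τ (x : L' × (L' ⧸ S9.brSpan SL')).1 = 0 from x.2, S9.alpha_zero]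
    let SM0 := S9.restrictHLR SPQ M0 hb0 ha0
    have hcent0 : ∀ v : L' × (L' ⧸ S9.brSpan SL'), τ v.1 = 0 → v ∈ SPQ.center := by
      intro v hv a z
      have hc : v.1 ∈ SL'.center := hτcent hv
      refine ⟨?_, ?_, ?_⟩
      · show (SL'.bracket (a • v).1 z.1, (0 : L' ⧸ S9.brSpan SL')) = 0
        rw [Prod.smul_fst, (hc a z.1).1]
        rfl
      · show (SL'.bracket (a • SPQ.alpha v).1 z.1, (0 : L' ⧸ S9.brSpan SL')) = 0
        rw [Prod.smul_fst]
        show (SL'.bracket (a • SL'.alpha v.1) z.1, (0 : L' ⧸ S9.brSpan SL')) = 0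
        rw [(hc a z.1).2.1]
        rfl
      · exact (hc a z.1).2.2
    have hext : IsAlphaCentralExt SM0 SPQ SK Subtype.val τ' := by
      refine ⟨⟨fun x y => rfl, fun a x => rfl, fun x y => rfl, fun x => rfl, fun x a => rfl⟩,
        ⟨τ'add, τ'smul, fun x y => hτhom.2.2.1 x.1 y.1, fun x => hτhom.2.2.2.1 x.1,
          fun x a => hτhom.2.2.2.2 x.1 a⟩,
        Subtype.val_injective, ?_, ?_, ?_⟩
      · intro k0
        obtain ⟨x, hx⟩ := hτsurj k0
        exact ⟨(x, 0), hx⟩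
      · exact Subtype.range_coe_subtype
      · intro m
        refine hcent0 _ ?_
        show τ (SL'.alpha (m : L' × (L' ⧸ S9.brSpan SL')).1) = 0
        rw [hτhom.2.2.2.1, show τ (m : L' × (L' ⧸ S9.brSpan SL')).1 = 0 from m.2,
          S9.alpha_zero]
    obtain ⟨θ, ⟨θhom, θcomp⟩, θuniq⟩ :=
      huniv (↥M0) (L' × (L' ⧸ S9.brSpan SL')) SM0 SPQ Subtype.val τ' hext
    have e1 : (fun x : L' => ((x, 0) : L' × (L' ⧸ S9.brSpan SL'))) = θ := by
      apply θuniq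
      refine ⟨⟨?_, ?_, ?_, ?_, ?_⟩, fun x => rfl⟩
      · intro x y; exact Prod.ext rfl (by simp)
      · intro a x; exact Prod.ext rfl (by simp)
      · intro x y; exact Prod.ext rfl rfl
      · intro x; exact Prod.ext rfl (S9.qAlpha_zero SL').symm
      · intro x a; rfl
    have e2 : (fun x : L' =>
        ((x, Submodule.Quotient.mk x) : L' × (L' ⧸ S9.brSpan SL'))) = θ := by
      apply θuniq
      refine ⟨⟨?_, ?_, ?_, ?_, ?_⟩, fun x => rfl⟩
      · intro x y; exact Prod.ext rfl (by simp)
      · intro a x; exact Prod.ext rfl (by simp)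
      · intro x y
        exact Prod.ext rfl
          ((Submodule.Quotient.mk_eq_zero _).mpr (Submodule.subset_span ⟨x, y, rfl⟩))
      · intro x; exact Prod.ext rfl (S9.qAlpha_mk SL' x).symm
      · intro x a; rfl
    rw [eq_top_iff]
    intro x _
    have hx := congrFun (e2.trans e1.symm) x
    have hx2 : (Submodule.Quotient.mk x : L' ⧸ S9.brSpan SL') = 0 := congrArg Prod.snd hx
    exact (Submodule.Quotient.mk_eq_zero _).mp hx2
  -- Step 2: rho of alpha'd elements over central images vanishes.
  have hrho0 : ∀ x : L', τ x ∈ SK.center → ∀ a : A, SL'.rho (SL'.alpha x) a = 0 := by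
    intro x hx a
    obtain ⟨b, rfl⟩ := hφ a
    rw [SL'.rho_alpha, ← hτhom.2.2.2.2, (hx b 0).2.2, map_zero]
  -- Step 3: brackets with alpha'd central-image elements vanish.
  have hC0 : ∀ q : L', τ q ∈ SK.center → ∀ z : L', SL'.bracket (SL'.alpha q) z = 0 := by
    intro q hq z
    have hz : z ∈ S9.brSpan SL' := by rw [hperf]; exact Submodule.mem_top
    induction hz using Submodule.span_induction with
    | mem w hw =>
        obtain ⟨y, u, rfl⟩ := hw
        have hc1 : SL'.bracket u q ∈ SL'.center := by
          refine hτcent ?_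
          show τ (SL'.bracket u q) = 0
          rw [hτhom.2.2.1, SK.skew]
          have h := (hq 1 (τ u)).1
          rw [one_smul] at h
          rw [h, neg_zero]
        have hc2 : SL'.bracket q y ∈ SL'.center := by
          refine hτcent ?_
          show τ (SL'.bracket q y) = 0
          rw [hτhom.2.2.1]
          have h := (hq 1 (τ y)).1
          rwa [one_smul] at h
        have hj := SL'.hom_jacobi q y u
        rw [S9.bracket_central_right SL' hc1, S9.bracket_central_right SL' hc2,
          add_zero, add_zero] at hj
        exact hj
    | zero => exact S9.bracket_zero_right SL' _
    | add x y hx hy ihx ihy => rw [SL'.add_right, ihx, ihy, add_zero]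
    | smul a x hx ih =>
        rw [SL'.leibniz, ih, smul_zero, zero_add, hrho0 q hq a, zero_smul]
  have hC : ∀ w : L', τ w ∈ SK.center →
      ∀ (a : A) (z : L'), SL'.bracket (a • SL'.alpha w) z = 0 := by
    intro w hw a z
    obtain ⟨b, rfl⟩ := hφ a
    rw [← SL'.alpha_smulA]
    refine hC0 (b • w) ?_ z
    rw [hτhom.2.1]
    exact S9.center_smul SK hw b
  constructor
  · refine ⟨S9.hom_comp hτhom hσhom, ?_, ?_⟩
    · intro l
      obtain ⟨k0, hk0⟩ := hσsurj l
      obtain ⟨x, hx⟩ := hτsurj k0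
      exact ⟨x, by simp only []; rw [hx, hk0]⟩
    · intro x hx
      have hK : τ x ∈ SK.center := hσcent hx
      have hK2 : τ (SL'.alpha x) ∈ SK.center := by
        refine hσcent ?_
        show σ (τ (SL'.alpha x)) = 0
        rw [hτhom.2.2.2.1, hσhom.2.2.2.1, hx, S9.alpha_zero]
      intro a z
      exact ⟨hC x hK a z, hC (SL'.alpha x) hK2 a z, hrho0 x hK a⟩
  -- Part 2: universality against central extensions of L.
  · intro H F _ _ _ _ _ _ _ _ SH SF k γ h3
    obtain ⟨hkhom, hγhom, hkinj, hγsurj, hkrange, hγcent⟩ := h3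
    let P := S9.pbSub SF SK SL γ σ hγhom hσhom
    let SP := S9.pbHLR SF SK SL γ σ hγhom hσhom
    let τ2 : ↥P → K := fun p => (p : F × K).2
    have τ2add : ∀ x y, τ2 (x + y) = τ2 x + τ2 y := fun x y => rfl
    have τ2smul : ∀ (a : A) (x : ↥P), τ2 (a • x) = a • τ2 x := fun a x => rfl
    let M2 : Submodule A ↥P := S9.kerPullSub τ2 τ2add τ2smul
    have hb2 : ∀ x y : M2, SP.bracket (x : ↥P) (y : ↥P) ∈ M2 := by
      intro x y
      show SK.bracket (((x : ↥P) : F × K)).2 (((y : ↥P) : F × K)).2 = 0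
      rw [show (((x : ↥P) : F × K)).2 = 0 from x.2, S9.bracket_zero_left]
    have ha2 : ∀ x : M2, SP.alpha (x : ↥P) ∈ M2 := by
      intro x
      show SK.alpha (((x : ↥P) : F × K)).2 = 0
      rw [show (((x : ↥P) : F × K)).2 = 0 from x.2, S9.alpha_zero]
    let SM2 := S9.restrictHLR SP M2 hb2 ha2
    have hFK : ∀ (p : ↥P) (a : A), SF.rho ((p : F × K)).1 a = SK.rho ((p : F × K)).2 a := by
      intro p a
      rw [← hγhom.2.2.2.2, ← hσhom.2.2.2.2,
        (S9.pbSub_mem SF SK SL γ σ hγhom hσhom).mp p.2]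
    have hcent2 : ∀ p : ↥P, ((p : F × K)).2 = 0 → p ∈ SP.center := by
      intro p hp a z
      have hker : γ ((p : F × K)).1 = 0 := by
        rw [(S9.pbSub_mem SF SK SL γ σ hγhom hσhom).mp p.2, hp, S9.hom_zero hσhom]
      have hc : ((p : F × K)).1 ∈ SF.center := hγcent hker
      refine ⟨?_, ?_, ?_⟩
      · apply Subtype.ext
        refine Prod.ext ?_ ?_
        · show SF.bracket (a • ((p : F × K)).1) (((z : F × K))).1 = (0 : F)
          exact (hc a _).1
        · show SK.bracket (a • ((p : F × K)).2) (((z : F × K))).2 = (0 : K)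
          rw [hp, smul_zero, S9.bracket_zero_left]
      · apply Subtype.ext
        refine Prod.ext ?_ ?_
        · show SF.bracket (a • SF.alpha ((p : F × K)).1) (((z : F × K))).1 = (0 : F)
          exact (hc a _).2.1
        · show SK.bracket (a • SK.alpha ((p : F × K)).2) (((z : F × K))).2 = (0 : K)
          rw [hp, S9.alpha_zero, smul_zero, S9.bracket_zero_left]
      · show SF.rho ((p : F × K)).1 a = 0
        exact (hc a ((z : F × K)).1).2.2
    have hext2 : IsAlphaCentralExt SM2 SP SK Subtype.val τ2 := by
      refine ⟨⟨fun x y => rfl, fun a x => rfl, fun x y => rfl, fun x => rfl, fun x a => rfl⟩,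
        ⟨τ2add, τ2smul, fun x y => rfl, fun x => rfl, fun p a => (hFK p a).symm⟩,
        Subtype.val_injective, ?_, ?_, ?_⟩
      · intro kk
        obtain ⟨f0, hf0⟩ := hγsurj (σ kk)
        exact ⟨⟨(f0, kk), hf0⟩, rfl⟩
      · exact Subtype.range_coe_subtype
      · intro m
        refine hcent2 _ ?_
        show SK.alpha (((m : ↥P) : F × K)).2 = 0
        rw [show (((m : ↥P) : F × K)).2 = 0 from m.2, S9.alpha_zero]
    obtain ⟨θ, ⟨θhom, θcomp⟩, θuniq⟩ := huniv (↥M2) (↥P) SM2 SP Subtype.val τ2 hext2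
    have pr1hom : IsHLRHom SP SF (fun p => ((p : F × K)).1) :=
      ⟨fun p q => rfl, fun a p => rfl, fun p q => rfl, fun p => rfl, fun p a => rfl⟩
    have hcomp2 : IsHLRHom SL' SF (fun x => ((θ x : F × K)).1) :=
      S9.hom_comp (f := θ) (g := fun p : ↥P => ((p : F × K)).1) θhom pr1hom
    refine ⟨fun x => ((θ x : F × K)).1, ⟨hcomp2, fun x => ?_⟩, ?_⟩
    · rw [(S9.pbSub_mem SF SK SL γ σ hγhom hσhom).mp (θ x).2]
      exact congrArg σ (θcomp x)
    · intro h' hh'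
      obtain ⟨h'hom, h'prop⟩ := hh'
      have hmem : ∀ x : L', ((h' x, τ x) : F × K) ∈ P := by
        intro x
        exact (S9.pbSub_mem SF SK SL γ σ hγhom hσhom).mpr (h'prop x)
      have θ'hom : IsHLRHom SL' SP (fun x => (⟨(h' x, τ x), hmem x⟩ : ↥P)) := by
        refine ⟨?_, ?_, ?_, ?_, ?_⟩
        · intro x y; exact Subtype.ext (Prod.ext (h'hom.1 x y) (hτhom.1 x y))
        · intro a x; exact Subtype.ext (Prod.ext (h'hom.2.1 a x) (hτhom.2.1 a x))
        · intro x y; exact Subtype.ext (Prod.ext (h'hom.2.2.1 x y) (hτhom.2.2.1 x y))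
        · intro x; exact Subtype.ext (Prod.ext (h'hom.2.2.2.1 x) (hτhom.2.2.2.1 x))
        · intro x a; exact h'hom.2.2.2.2 x a
      have e3 : (fun x => (⟨(h' x, τ x), hmem x⟩ : ↥P)) = θ :=
        θuniq _ ⟨θ'hom, fun x => rfl⟩
      funext x
      exact congrArg (fun g => ((g x : ↥P) : F × K).1) e3
end
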